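/- arXiv:0907.3692 — 4 statements merged into one kernel-verified Lean document; each statement's English description precedes it below -/
import Mathlib

section
/- Let $(A_0,A_1)$ and $(B_0,B_1)$ be Banach couples with $A_0\subset A_1$, and let $T:A_1\to B_1$ satisfy $T(A_0)\subset B_0$ with $\|Ta\|_{B_0}\le C_0\|a\|_{A_0}$ for all $a\in A_0$, and $\|Ta-Ta'\|_{B_1}\le C_1\|a-a'\|_{A_1}$ for all $a,a'\in A_1$. Then for each $\theta\in(0,1)$ and $p\in[1,\infty]$, $T$ maps $(A_0,A_1)_{\theta,p}$ into $(B_0,B_1)_{\theta,p}$ and $\|Ta\|_{(B_0,B_1)_{\theta,p}}\le C_0^{1-\theta}C_1^{\theta}\|a\|_{(A_0,A_1)_{\theta,p}}$ for all $a\in(A_0,A_1)_{\theta,p}$. -/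
open scoped ENNReal
open Filter Topology MeasureTheory

/-- A member of a Banach couple, modeled as an extended-real-valued norm on a common
ambient real vector space `X`; the space itself is `{x | N x < ∞}`.  The `complete`
field expresses that this space is a Banach space. -/
structure CoupleNorm (X : Type*) [AddCommGroup X] [Module ℝ X] where
  N : X → ℝ≥0∞
  zero : N 0 = 0
  add_le : ∀ x y, N (x + y) ≤ N x + N y
  smul_eq : ∀ (c : ℝ) (x : X), N (c • x) = ENNReal.ofReal |c| * N x
  definite : ∀ x, N x = 0 → x = 0
  complete : ∀ u : ℕ → X, (∀ n, N (u n) < ∞) →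
    (∀ ε : ℝ≥0∞, 0 < ε → ∃ n0, ∀ m n, n0 ≤ m → n0 ≤ n → N (u m - u n) < ε) →
    ∃ x, Tendsto (fun n => N (u n - x)) atTop (𝓝 0)

namespace CoupleNorm

variable {X : Type*} [AddCommGroup X] [Module ℝ X]

/-- The Peetre K-functional of the couple `(N0, N1)`. -/
noncomputable def Kfun (N0 N1 : CoupleNorm X) (t : ℝ) (x : X) : ℝ≥0∞ :=
  ⨅ y : X, N0.N y + ENNReal.ofReal t * N1.N (x - y)

/-- The measure dt/t on (0,∞). -/
noncomputable def haarMeas : Measure ℝ :=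
  (volume.restrict (Set.Ioi (0 : ℝ))).withDensity fun t => ENNReal.ofReal t⁻¹

/-- The real interpolation norm `(θ, p)`, for `p ∈ [1,∞]`, as an extended real. -/
noncomputable def interpNorm (N0 N1 : CoupleNorm X) (θ : ℝ) (p : ℝ≥0∞) (x : X) : ℝ≥0∞ :=
  if p = ∞ then ⨆ t : {t : ℝ // 0 < t}, (ENNReal.ofReal t.1) ^ (-θ) * Kfun N0 N1 t.1 x
  else (∫⁻ t, ((ENNReal.ofReal t) ^ (-θ) * Kfun N0 N1 t x) ^ p.toReal ∂haarMeas) ^ (1 / p.toReal)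

/-- `N0 ⊂ N1`: continuous embedding (the inclusion of domains is then automatic). -/
def Embeds (N0 N1 : CoupleNorm X) : Prop :=
  ∃ c : ℝ, 0 < c ∧ ∀ x, N1.N x ≤ ENNReal.ofReal c * N0.N x

/-- A set bounded with respect to a generalized norm. -/
def BddWith (NN : X → ℝ≥0∞) (S : Set X) : Prop :=
  ∃ R : ℝ, ∀ x ∈ S, NN x ≤ ENNReal.ofReal R

/-- Sequential relative compactness with respect to a generalized norm. -/
def RelCompactWith (NN : X → ℝ≥0∞) (S : Set X) : Prop :=
  ∀ u : ℕ → X, (∀ n, u n ∈ S) →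
    ∃ (σ : ℕ → ℕ) (x : X), StrictMono σ ∧
      Tendsto (fun n => NN (u (σ n) - x)) atTop (𝓝 0)

/-- Sequential compactness (with limits inside the set) w.r.t. a generalized norm. -/
def CompactWith (NN : X → ℝ≥0∞) (S : Set X) : Prop :=
  ∀ u : ℕ → X, (∀ n, u n ∈ S) →
    ∃ x ∈ S, ∃ σ : ℕ → ℕ, StrictMono σ ∧
      Tendsto (fun n => NN (u (σ n) - x)) atTop (𝓝 0)

end CoupleNorm


section Aux

open CoupleNorm ENNReal

variable {X : Type*} [AddCommGroup X] [Module ℝ X]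

/-- `Kfun` is monotone in `t`. -/
lemma kfun_mono (N0 N1 : CoupleNorm X) (x : X) :
    Monotone (fun t => Kfun N0 N1 t x) := by
  intro t t' htt'
  exact iInf_mono fun y => add_le_add le_rfl
    (mul_le_mul_left (ENNReal.ofReal_le_ofReal htt') _)

/-- `Kfun` is measurable in `t`. -/
lemma kfun_measurable (N0 N1 : CoupleNorm X) (x : X) :
    Measurable (fun t => Kfun N0 N1 t x) :=
  (kfun_mono N0 N1 x).measurable

/-- Scaling invariance of the multiplicative Haar measure on `(0,∞)`. -/
lemma lintegral_haar_scale {h : ℝ → ℝ≥0∞} (hm : Measurable h) {s : ℝ} (hs : 0 < s) :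
    ∫⁻ t, h (s * t) ∂haarMeas = ∫⁻ t, h t ∂haarMeas := by
  have hw : Measurable (fun t : ℝ => ENNReal.ofReal t⁻¹) :=
    ENNReal.measurable_ofReal.comp measurable_inv
  have hms : Measurable (fun t : ℝ => h (s * t)) := hm.comp (measurable_const_mul s)
  rw [haarMeas, lintegral_withDensity_eq_lintegral_mul _ hw hms,
    lintegral_withDensity_eq_lintegral_mul _ hw hm]
  set g : ℝ → ℝ≥0∞ := fun u => ENNReal.ofReal s * (ENNReal.ofReal u⁻¹ * h u) with hg
  have hgm : Measurable g := (measurable_const.mul (hw.mul hm))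
  have key : ∀ t : ℝ, ((fun t => ENNReal.ofReal t⁻¹) * fun t => h (s * t)) t = g (s * t) := by
    intro t
    simp only [hg, Pi.mul_apply, mul_inv]
    rw [ENNReal.ofReal_mul (by positivity), ← mul_assoc, ← mul_assoc,
      ← ENNReal.ofReal_mul hs.le, mul_inv_cancel₀ hs.ne', ENNReal.ofReal_one, one_mul]
  have hpre : (fun t : ℝ => s * t) ⁻¹' (Set.Ioi (0 : ℝ)) = Set.Ioi 0 := by
    ext t; simp [Set.mem_Ioi, mul_pos_iff_of_pos_left, hs]
  calc ∫⁻ t in Set.Ioi (0:ℝ), ((fun t => ENNReal.ofReal t⁻¹) * fun t => h (s * t)) t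
      = ∫⁻ t in Set.Ioi (0:ℝ), g (s * t) := by
        exact lintegral_congr key
    _ = ∫⁻ u, g u ∂((volume.restrict (Set.Ioi (0:ℝ))).map (fun t => s * t)) := by
        rw [lintegral_map hgm (measurable_const_mul s)]
    _ = ∫⁻ u, g u ∂(ENNReal.ofReal |s⁻¹| • volume.restrict (Set.Ioi (0:ℝ))) := by
        conv_lhs => rw [← hpre]
        rw [← Measure.restrict_map (measurable_const_mul s) measurableSet_Ioi,
          Real.map_volume_mul_left hs.ne', Measure.restrict_smul]
    _ = ENNReal.ofReal |s⁻¹| * ∫⁻ u in Set.Ioi (0:ℝ), g u := lintegral_smul_measure _ _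
    _ = ∫⁻ u in Set.Ioi (0:ℝ), ENNReal.ofReal |s⁻¹| * g u := (lintegral_const_mul _ hgm).symm
    _ = ∫⁻ u in Set.Ioi (0:ℝ), ((fun t => ENNReal.ofReal t⁻¹) * h) u := by
        refine lintegral_congr fun u => ?_
        simp only [hg, Pi.mul_apply, ← mul_assoc]
        rw [abs_of_pos (inv_pos.mpr hs), ← ENNReal.ofReal_mul (inv_pos.mpr hs).le,
          inv_mul_cancel₀ hs.ne', ENNReal.ofReal_one, one_mul]

end Aux

/-- nonlinear interpolation theorem with constant `C0^(1-θ) C1^θ`. -/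
theorem stmt1 {X Y : Type*} [AddCommGroup X] [Module ℝ X] [AddCommGroup Y] [Module ℝ Y]
    (A0 A1 : CoupleNorm X) (B0 B1 : CoupleNorm Y)
    (hA : CoupleNorm.Embeds A0 A1)
    (T : X → Y) (C0 C1 : ℝ) (hC0 : 0 < C0) (hC1 : 0 < C1)
    (hT0 : ∀ a : X, B0.N (T a) ≤ ENNReal.ofReal C0 * A0.N a)
    (hT1 : ∀ a a' : X, A1.N a < ∞ → A1.N a' < ∞ →
      B1.N (T a - T a') ≤ ENNReal.ofReal C1 * A1.N (a - a')) :
    ∀ θ : ℝ, 0 < θ → θ < 1 → ∀ p : ℝ≥0∞, 1 ≤ p →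
      ∀ a : X, A1.N a < ∞ →
        CoupleNorm.interpNorm B0 B1 θ p (T a) ≤
          ENNReal.ofReal (C0 ^ (1 - θ) * C1 ^ θ) * CoupleNorm.interpNorm A0 A1 θ p a := by
  intro θ hθ0 hθ1 p hp a ha1
  set s : ℝ := C1 / C0 with hsdef
  have hs : 0 < s := div_pos hC1 hC0
  set C : ℝ≥0∞ := ENNReal.ofReal (C0 ^ (1 - θ) * C1 ^ θ) with hCdef
  -- Step 1: K-functional bound
  have hK : ∀ t : ℝ, 0 ≤ t →
      CoupleNorm.Kfun B0 B1 t (T a) ≤ ENNReal.ofReal C0 * CoupleNorm.Kfun A0 A1 (s * t) a := by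
    intro t ht
    rw [CoupleNorm.Kfun, CoupleNorm.Kfun,
      ENNReal.mul_iInf_of_ne (ENNReal.ofReal_pos.mpr hC0).ne' ENNReal.ofReal_ne_top]
    refine le_iInf fun y => ?_
    by_cases hy : A0.N y = ∞
    · rw [hy, top_add, ENNReal.mul_top (ENNReal.ofReal_pos.mpr hC0).ne']
      exact le_top
    · obtain ⟨c, hc, hemb⟩ := hA
      have hy1 : A1.N y < ∞ :=
        lt_of_le_of_lt (hemb y) (ENNReal.mul_lt_top ENNReal.ofReal_lt_top (Ne.lt_top hy))
      refine le_trans (iInf_le _ (T y)) ?_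
      rw [mul_add]
      refine add_le_add (hT0 y) ?_
      have heq : ENNReal.ofReal C0 * (ENNReal.ofReal (s * t) * A1.N (a - y)) =
          ENNReal.ofReal t * (ENNReal.ofReal C1 * A1.N (a - y)) := by
        rw [← mul_assoc, ← mul_assoc, ← ENNReal.ofReal_mul hC0.le, ← ENNReal.ofReal_mul ht]
        congr 2
        rw [hsdef]
        field_simp
      rw [heq]
      exact mul_le_mul_right (hT1 a y ha1 hy1) _
  -- Step 2: pointwise weighted bound for t > 0
  have hpt : ∀ t : ℝ, 0 < t →
      ENNReal.ofReal t ^ (-θ) * CoupleNorm.Kfun B0 B1 t (T a) ≤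
        C * (ENNReal.ofReal (s * t) ^ (-θ) * CoupleNorm.Kfun A0 A1 (s * t) a) := by
    intro t ht
    calc ENNReal.ofReal t ^ (-θ) * CoupleNorm.Kfun B0 B1 t (T a)
        ≤ ENNReal.ofReal t ^ (-θ) *
          (ENNReal.ofReal C0 * CoupleNorm.Kfun A0 A1 (s * t) a) :=
          mul_le_mul_right (hK t ht.le) _
      _ = C * (ENNReal.ofReal (s * t) ^ (-θ) * CoupleNorm.Kfun A0 A1 (s * t) a) := by
          rw [← mul_assoc, ← mul_assoc]
          congr 1
          rw [ENNReal.ofReal_rpow_of_pos ht, ENNReal.ofReal_rpow_of_pos (mul_pos hs ht),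
            ← ENNReal.ofReal_mul (Real.rpow_nonneg ht.le _), hCdef,
            ← ENNReal.ofReal_mul (by positivity)]
          congr 1
          rw [Real.mul_rpow hs.le ht.le, Real.rpow_neg ht.le, Real.rpow_neg hs.le,
            hsdef, Real.div_rpow hC1.le hC0.le, Real.rpow_sub hC0, Real.rpow_one]
          have h0 : (0:ℝ) < C0 ^ θ := Real.rpow_pos_of_pos hC0 θ
          have h1 : (0:ℝ) < C1 ^ θ := Real.rpow_pos_of_pos hC1 θ
          have h2 : (0:ℝ) < t ^ θ := Real.rpow_pos_of_pos ht θ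
          field_simp
  rcases eq_or_ne p ∞ with rfl | hne
  · -- p = ∞
    simp only [CoupleNorm.interpNorm, if_pos rfl]
    refine iSup_le fun t => (hpt t.1 t.2).trans (mul_le_mul_right ?_ C)
    exact le_iSup (fun u : {u : ℝ // 0 < u} =>
      ENNReal.ofReal u.1 ^ (-θ) * CoupleNorm.Kfun A0 A1 u.1 a) ⟨s * t.1, mul_pos hs t.2⟩
  · -- p < ∞
    have hp0 : p ≠ 0 := (lt_of_lt_of_le zero_lt_one hp).ne'
    have hpt0 : 0 < p.toReal := ENNReal.toReal_pos hp0 hne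
    simp only [CoupleNorm.interpNorm, if_neg hne]
    set pt := p.toReal with hptdef
    set F : ℝ → ℝ≥0∞ :=
      fun u => (ENNReal.ofReal u ^ (-θ) * CoupleNorm.Kfun A0 A1 u a) ^ pt with hFdef
    have m1 : Measurable fun u : ℝ => ENNReal.ofReal u ^ (-θ) * CoupleNorm.Kfun A0 A1 u a :=
      (ENNReal.continuous_rpow_const.measurable.comp ENNReal.measurable_ofReal).mul
        (kfun_measurable A0 A1 a)
    have mF : Measurable F := ENNReal.continuous_rpow_const.measurable.comp m1
    have hae : ∀ᵐ t ∂CoupleNorm.haarMeas, 0 < t := by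
      rw [CoupleNorm.haarMeas]
      exact (withDensity_absolutelyContinuous _ _).ae_le
        ((ae_restrict_mem measurableSet_Ioi).mono fun t ht => ht)
    calc (∫⁻ t, (ENNReal.ofReal t ^ (-θ) * CoupleNorm.Kfun B0 B1 t (T a)) ^ pt
            ∂CoupleNorm.haarMeas) ^ (1 / pt)
        ≤ (∫⁻ t, C ^ pt * F (s * t) ∂CoupleNorm.haarMeas) ^ (1 / pt) := by
          refine ENNReal.rpow_le_rpow (lintegral_mono_ae (hae.mono fun t ht => ?_))
            (by positivity)
          rw [hFdef]
          calc (ENNReal.ofReal t ^ (-θ) * CoupleNorm.Kfun B0 B1 t (T a)) ^ pt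
              ≤ (C * (ENNReal.ofReal (s * t) ^ (-θ) * CoupleNorm.Kfun A0 A1 (s * t) a)) ^ pt :=
                ENNReal.rpow_le_rpow (hpt t ht) hpt0.le
            _ = C ^ pt * (ENNReal.ofReal (s * t) ^ (-θ) *
                  CoupleNorm.Kfun A0 A1 (s * t) a) ^ pt :=
                ENNReal.mul_rpow_of_nonneg _ _ hpt0.le
      _ = (C ^ pt * ∫⁻ t, F (s * t) ∂CoupleNorm.haarMeas) ^ (1 / pt) := by
          have mFs : Measurable fun t : ℝ => F (s * t) := mF.comp (measurable_const_mul s)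
          rw [lintegral_const_mul _ mFs]
      _ = (C ^ pt * ∫⁻ t, F t ∂CoupleNorm.haarMeas) ^ (1 / pt) := by
          rw [lintegral_haar_scale mF hs]
      _ = C * (∫⁻ t, F t ∂CoupleNorm.haarMeas) ^ (1 / pt) := by
          rw [ENNReal.mul_rpow_of_nonneg _ _ (by positivity), ← ENNReal.rpow_mul,
            mul_one_div_cancel hpt0.ne', ENNReal.rpow_one]
end

section
/- Let $(A_0,A_1)$ and $(B_0,B_1)$ be Banach couples with $A_0\subset A_1$, and let $T:A_1\to B_1$ satisfy: $T(A_0)\subset B_0$ with $\|Ta\|_{B_0}\le C_0\|a\|_{A_0}$ for all $a\in A_0$; $\|Ta-Ta'\|_{B_1}\le C_1\|a-a'\|_{A_1}$ for all $a,a'\in A_1$; and $T$ maps every bounded subset of $A_0$ to a relatively compact subset of $B_0$. Then for each $\theta\in(0,1)$ and $p\in[1,\infty]$, $T$ maps every bounded subset of $(A_0,A_1)_{\theta,p}$ to a relatively compact subset of $B_0+B_1$. -/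
open scoped ENNReal
open Filter Topology MeasureTheory

section Aux

namespace CoupleNorm

variable {X : Type*} [AddCommGroup X] [Module ℝ X]

lemma N_neg (N0 : CoupleNorm X) (x : X) : N0.N (-x) = N0.N x := by
  have h := N0.smul_eq (-1) x
  simpa using h

lemma N_sum_le (N0 : CoupleNorm X) (a : ℕ → X) (s : Finset ℕ) :
    N0.N (∑ j ∈ s, a j) ≤ ∑ j ∈ s, N0.N (a j) := by
  classical
  induction s using Finset.induction_on with
  | empty => simp [N0.zero]
  | insert _ _ hx ih =>
      rw [Finset.sum_insert hx, Finset.sum_insert hx]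
      exact (N0.add_le _ _).trans (add_le_add_right ih _)

lemma Kfun_le (N0 N1 : CoupleNorm X) (t : ℝ) (x y : X) :
    Kfun N0 N1 t x ≤ N0.N y + ENNReal.ofReal t * N1.N (x - y) :=
  iInf_le _ y

lemma Kfun_add_le (N0 N1 : CoupleNorm X) (p q : X) :
    Kfun N0 N1 1 (p + q) ≤ N0.N p + N1.N q := by
  have h := Kfun_le N0 N1 1 (p + q) p
  simpa [ENNReal.ofReal_one] using h

lemma Kfun_mono (N0 N1 : CoupleNorm X) (x : X) :
    Monotone (fun t => Kfun N0 N1 t x) := by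
  intro s t hst
  exact iInf_mono fun y =>
    add_le_add_right (mul_le_mul_left (ENNReal.ofReal_le_ofReal hst) _) _

lemma geom_tail (n m : ℕ) :
    ∑ j ∈ Finset.Ico n m, ((2:ℝ≥0∞)⁻¹) ^ j ≤ 2⁻¹ ^ n * 2 := by
  rcases le_or_gt n m with h | h
  · rw [Finset.sum_Ico_eq_sum_range]
    calc ∑ i ∈ Finset.range (m - n), ((2:ℝ≥0∞)⁻¹) ^ (n + i)
        = ∑ i ∈ Finset.range (m - n), 2⁻¹ ^ n * 2⁻¹ ^ i := by
          simp [pow_add]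
      _ = 2⁻¹ ^ n * ∑ i ∈ Finset.range (m - n), (2:ℝ≥0∞)⁻¹ ^ i := by
          rw [Finset.mul_sum]
      _ ≤ 2⁻¹ ^ n * ∑' i : ℕ, (2:ℝ≥0∞)⁻¹ ^ i :=
          mul_le_mul_right (ENNReal.sum_le_tsum _) _
      _ ≤ 2⁻¹ ^ n * 2 := by
          rw [ENNReal.tsum_geometric]
          refine mul_le_mul_right (le_of_eq ?_) _
          rw [ENNReal.one_sub_inv_two, inv_inv]
  · rw [Finset.Ico_eq_empty (by omega)]
    simp

/-- From a Cauchy sequence w.r.t. `Kfun B0 B1 1`, extract a convergent subsequence. -/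
lemma exists_limit (B0 B1 : CoupleNorm X) (w : ℕ → X)
    (hw : ∀ ε : ℝ≥0∞, 0 < ε → ∃ N, ∀ m n, N ≤ m → N ≤ n → Kfun B0 B1 1 (w m - w n) < ε) :
    ∃ (τ : ℕ → ℕ) (x : X), StrictMono τ ∧
      Tendsto (fun j => Kfun B0 B1 1 (w (τ j) - x)) atTop (𝓝 0) := by
  have hpow : ∀ j : ℕ, (0:ℝ≥0∞) < 2⁻¹ ^ j := fun j => ENNReal.pow_pos (by norm_num) j
  choose φ hφ using fun j => hw (2⁻¹ ^ j) (hpow j)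
  set τ : ℕ → ℕ := fun j => Nat.rec (φ 0) (fun j t => max (t+1) (φ (j+1))) j with hτdef
  have hτsucc : ∀ j, τ (j+1) = max (τ j + 1) (φ (j+1)) := fun j => rfl
  have hτmono : StrictMono τ := by
    refine strictMono_nat_of_lt_succ fun j => ?_
    rw [hτsucc]
    omega
  have hτφ : ∀ j, φ j ≤ τ j := by
    intro j
    cases j with
    | zero => exact le_refl _
    | succ j => rw [hτsucc]; omega
  have hd : ∀ j, Kfun B0 B1 1 (w (τ (j+1)) - w (τ j)) < 2⁻¹ ^ j := by
    intro j
    refine hφ j _ _ ?_ (hτφ j)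
    exact le_trans (hτφ j) (hτmono.monotone (Nat.le_succ j))
  have hdec : ∀ j, ∃ y, B0.N y + B1.N ((w (τ (j+1)) - w (τ j)) - y) < 2⁻¹ ^ j := by
    intro j
    have h := hd j
    rw [Kfun] at h
    obtain ⟨y, hy⟩ := iInf_lt_iff.mp h
    exact ⟨y, by simpa [ENNReal.ofReal_one] using hy⟩
  choose a ha using hdec
  set cc : ℕ → X := fun j => (w (τ (j+1)) - w (τ j)) - a j with hccdef
  have ha0 : ∀ j, B0.N (a j) ≤ 2⁻¹ ^ j := fun j =>
    (le_add_right le_rfl).trans (ha j).le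
  have hc1 : ∀ j, B1.N (cc j) ≤ 2⁻¹ ^ j := fun j =>
    (le_add_left le_rfl).trans (ha j).le
  set P : ℕ → X := fun J => ∑ j ∈ Finset.range J, a j with hPdef
  set Q : ℕ → X := fun J => ∑ j ∈ Finset.range J, cc j with hQdef
  have hPc : ∀ n m, n ≤ m → B0.N (P m - P n) ≤ 2⁻¹ ^ n * 2 := by
    intro n m hnm
    have h1 : P m - P n = ∑ j ∈ Finset.Ico n m, a j := by
      rw [hPdef]
      simp only
      rw [Finset.sum_Ico_eq_sub _ hnm]
    rw [h1]
    exact (N_sum_le B0 a _).trans <|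
      (Finset.sum_le_sum fun j _ => ha0 j).trans (geom_tail n m)
  have hQc : ∀ n m, n ≤ m → B1.N (Q m - Q n) ≤ 2⁻¹ ^ n * 2 := by
    intro n m hnm
    have h1 : Q m - Q n = ∑ j ∈ Finset.Ico n m, cc j := by
      rw [hQdef]
      simp only
      rw [Finset.sum_Ico_eq_sub _ hnm]
    rw [h1]
    exact (N_sum_le B1 cc _).trans <|
      (Finset.sum_le_sum fun j _ => hc1 j).trans (geom_tail n m)
  have hcauchy : ∀ (NB : CoupleNorm X) (PP : ℕ → X),
      (∀ n m, n ≤ m → NB.N (PP m - PP n) ≤ 2⁻¹ ^ n * 2) →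
      ∀ ε : ℝ≥0∞, 0 < ε → ∃ n0, ∀ m n, n0 ≤ m → n0 ≤ n → NB.N (PP m - PP n) < ε := by
    intro NB PP hPP ε hε
    obtain ⟨k, hk⟩ := ENNReal.exists_inv_two_pow_lt (a := ε / 2) (by
      simp only [ne_eq, ENNReal.div_eq_zero_iff]
      push_neg
      exact ⟨hε.ne', by norm_num⟩)
    refine ⟨k, fun m n hm hn => ?_⟩
    have key : ∀ m n, k ≤ n → n ≤ m → NB.N (PP m - PP n) < ε := by
      intro m n hn hnm
      calc NB.N (PP m - PP n) ≤ 2⁻¹ ^ n * 2 := hPP n m hnm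
        _ ≤ 2⁻¹ ^ k * 2 :=
            mul_le_mul_left (pow_le_pow_right_of_le_one' (by norm_num) hn) _
        _ < ε / 2 * 2 := ENNReal.mul_lt_mul_left (by norm_num) (by norm_num) hk
        _ ≤ ε := by rw [ENNReal.div_mul_cancel (by norm_num) (by norm_num)]
    rcases le_total n m with h | h
    · exact key m n hn h
    · rw [← N_neg NB, neg_sub]
      exact key n m hm h
  have hPfin : ∀ J, B0.N (P J) < ∞ := by
    intro J
    refine lt_of_le_of_lt (N_sum_le B0 a _) ?_
    refine lt_of_le_of_lt (Finset.sum_le_sum fun j _ => ha0 j) ?_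
    exact lt_of_le_of_lt (ENNReal.sum_le_tsum _) (by
      rw [ENNReal.tsum_geometric, ENNReal.one_sub_inv_two, inv_inv]
      exact ENNReal.ofNat_lt_top)
  have hQfin : ∀ J, B1.N (Q J) < ∞ := by
    intro J
    refine lt_of_le_of_lt (N_sum_le B1 cc _) ?_
    refine lt_of_le_of_lt (Finset.sum_le_sum fun j _ => hc1 j) ?_
    exact lt_of_le_of_lt (ENNReal.sum_le_tsum _) (by
      rw [ENNReal.tsum_geometric, ENNReal.one_sub_inv_two, inv_inv]
      exact ENNReal.ofNat_lt_top)
  obtain ⟨av, hav⟩ := B0.complete P hPfin (hcauchy B0 P hPc)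
  obtain ⟨cv, hcv⟩ := B1.complete Q hQfin (hcauchy B1 Q hQc)
  refine ⟨τ, w (τ 0) + av + cv, hτmono, ?_⟩
  have hid : ∀ J, w (τ J) = w (τ 0) + P J + Q J := by
    intro J
    induction J with
    | zero => simp [hPdef, hQdef]
    | succ J ih =>
        have h1 : P (J+1) = P J + a J := by
          rw [hPdef]; simp only; rw [Finset.sum_range_succ]
        have h2 : Q (J+1) = Q J + cc J := by
          rw [hQdef]; simp only; rw [Finset.sum_range_succ]
        have h3 : w (τ (J+1)) = w (τ J) + (a J + cc J) := by
          rw [hccdef]; simp only; abel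
        rw [h3, ih, h1, h2]; abel
  have hbound : ∀ J, Kfun B0 B1 1 (w (τ J) - (w (τ 0) + av + cv))
      ≤ B0.N (P J - av) + B1.N (Q J - cv) := by
    intro J
    have h1 : w (τ J) - (w (τ 0) + av + cv) = (P J - av) + (Q J - cv) := by
      rw [hid J]; abel
    rw [h1]
    exact Kfun_add_le B0 B1 _ _
  rw [ENNReal.tendsto_atTop_zero]
  intro ε hε
  rw [ENNReal.tendsto_atTop_zero] at hav hcv
  have hε2 : (0:ℝ≥0∞) < ε / 2 := ENNReal.div_pos hε.ne' (by norm_num)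
  obtain ⟨N1, hN1⟩ := hav (ε/2) hε2
  obtain ⟨N2, hN2⟩ := hcv (ε/2) hε2
  refine ⟨max N1 N2, fun J hJ => ?_⟩
  calc Kfun B0 B1 1 (w (τ J) - (w (τ 0) + av + cv))
      ≤ B0.N (P J - av) + B1.N (Q J - cv) := hbound J
    _ ≤ ε/2 + ε/2 :=
        add_le_add (hN1 J (le_trans (le_max_left _ _) hJ))
          (hN2 J (le_trans (le_max_right _ _) hJ))
    _ = ε := ENNReal.add_halves ε

/-- Diagonal extraction. -/
lemma diag {good : ℕ → ℕ → ℕ → Prop}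
    (ext : ∀ (k : ℕ) (ρ : ℕ → ℕ), StrictMono ρ →
      ∃ σ : ℕ → ℕ, StrictMono σ ∧ ∀ i j, good k (ρ (σ i)) (ρ (σ j))) :
    ∃ τ : ℕ → ℕ, StrictMono τ ∧ ∀ k m n, k ≤ m → k ≤ n → good k (τ m) (τ n) := by
  choose σf h1 h2 using ext
  let F : (k : ℕ) → {f : ℕ → ℕ // StrictMono f ∧ ∀ i j, good k (f i) (f j)} :=
    fun k => Nat.rec
      ⟨σf 0 id strictMono_id, h1 0 id strictMono_id, h2 0 id strictMono_id⟩
      (fun k ih => ⟨ih.1 ∘ σf (k+1) ih.1 ih.2.1, ih.2.1.comp (h1 _ _ _),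
        h2 (k+1) ih.1 ih.2.1⟩) k
  have hFsucc : ∀ k, (F (k+1)).1 = (F k).1 ∘ σf (k+1) (F k).1 (F k).2.1 := fun k => rfl
  refine ⟨fun n => (F n).1 n, ?_, ?_⟩
  · refine strictMono_nat_of_lt_succ fun n => ?_
    have h3 : (F n).1 n < (F n).1 (n+1) := (F n).2.1 (Nat.lt_succ_self n)
    have h4 : (F n).1 (n+1) ≤ (F n).1 (σf (n+1) (F n).1 (F n).2.1 (n+1)) :=
      (F n).2.1.monotone ((h1 (n+1) (F n).1 (F n).2.1).le_apply)
    calc (F n).1 n < (F n).1 (n+1) := h3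
      _ ≤ (F (n+1)).1 (n+1) := by rw [hFsucc]; exact h4
  · have hfac : ∀ k j n, ∃ i, (F (k+j)).1 n = (F k).1 i := by
      intro k j
      induction j with
      | zero => exact fun n => ⟨n, rfl⟩
      | succ j ih =>
          intro n
          have h5 : (F (k+(j+1))).1 n
              = (F (k+j)).1 (σf (k+j+1) (F (k+j)).1 (F (k+j)).2.1 n) := by
            rw [show k+(j+1) = (k+j)+1 from rfl, hFsucc]
            rfl
          rw [h5]
          exact ih _
    intro k m n hm hn
    obtain ⟨jm, rfl⟩ := Nat.exists_eq_add_of_le hm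
    obtain ⟨jn, rfl⟩ := Nat.exists_eq_add_of_le hn
    obtain ⟨i, hi⟩ := hfac k jm (k+jm)
    obtain ⟨i', hi'⟩ := hfac k jn (k+jn)
    simp only
    rw [hi, hi']
    exact (F k).2.2 i i'

/-- Pointwise bound on the K-functional from a bound on the interpolation norm. -/
lemma Kfun_le_of_interpNorm_le (A0 A1 : CoupleNorm X) {θ : ℝ} (hθ0 : 0 < θ) (hθ1 : θ < 1)
    {p : ℝ≥0∞} (hp : 1 ≤ p) {x : X} {R : ℝ}
    (hx : interpNorm A0 A1 θ p x ≤ ENNReal.ofReal R) {t : ℝ} (ht : 0 < t) :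
    Kfun A0 A1 t x ≤ 4 * ENNReal.ofReal t ^ θ * ENNReal.ofReal R := by
  have htne : ENNReal.ofReal t ≠ 0 := (ENNReal.ofReal_pos.mpr ht).ne'
  by_cases hpt : p = ∞
  · rw [interpNorm, if_pos hpt] at hx
    have h1 : ENNReal.ofReal t ^ (-θ) * Kfun A0 A1 t x ≤ ENNReal.ofReal R :=
      le_trans (le_iSup (fun s : {s : ℝ // 0 < s} =>
        (ENNReal.ofReal s.1) ^ (-θ) * Kfun A0 A1 s.1 x) ⟨t, ht⟩) hx
    have h2 : Kfun A0 A1 t x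
        = ENNReal.ofReal t ^ θ * (ENNReal.ofReal t ^ (-θ) * Kfun A0 A1 t x) := by
      rw [← mul_assoc, ← ENNReal.rpow_add _ _ htne ENNReal.ofReal_ne_top]
      simp
    rw [h2]
    calc ENNReal.ofReal t ^ θ * (ENNReal.ofReal t ^ (-θ) * Kfun A0 A1 t x)
        ≤ ENNReal.ofReal t ^ θ * ENNReal.ofReal R := mul_le_mul_right h1 _
      _ ≤ 4 * ENNReal.ofReal t ^ θ * ENNReal.ofReal R := by
          rw [mul_assoc]
          exact le_mul_of_one_le_left zero_le (by norm_num)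
  · have hq1 : 1 ≤ p.toReal := by
      have h := ENNReal.toReal_mono hpt hp
      simpa using h
    set q := p.toReal with hqdef
    have hq0 : 0 < q := lt_of_lt_of_le one_pos hq1
    rw [interpNorm, if_neg hpt] at hx
    set K : ℝ → ℝ≥0∞ := fun s => Kfun A0 A1 s x with hKdef
    have hK : Monotone K := Kfun_mono A0 A1 x
    have h2t : (0:ℝ) < 2 * t := by linarith
    have h2tne : ENNReal.ofReal (2*t) ≠ 0 := (ENNReal.ofReal_pos.mpr h2t).ne'
    have h2tnt : ENNReal.ofReal (2*t) ≠ ∞ := ENNReal.ofReal_ne_top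
    have hint : (∫⁻ s, ((ENNReal.ofReal s) ^ (-θ) * K s) ^ q ∂haarMeas)
        ≤ (ENNReal.ofReal R) ^ q := by
      have h := ENNReal.rpow_le_rpow hx hq0.le
      rwa [← ENNReal.rpow_mul, one_div, inv_mul_cancel₀ hq0.ne', ENNReal.rpow_one] at h
    set c : ℝ≥0∞ := ((ENNReal.ofReal (2*t)) ^ (-θ) * K t) ^ q with hc
    have hmeas : MeasurableSet (Set.Ioo t (2*t)) := measurableSet_Ioo
    have h3 : ∀ s, Set.indicator (Set.Ioo t (2*t)) (fun _ => c) s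
        ≤ ((ENNReal.ofReal s) ^ (-θ) * K s) ^ q := by
      intro s
      by_cases hs : s ∈ Set.Ioo t (2*t)
      · rw [Set.indicator_of_mem hs]
        refine ENNReal.rpow_le_rpow (mul_le_mul' ?_ (hK hs.1.le)) hq0.le
        rw [ENNReal.rpow_neg, ENNReal.rpow_neg]
        exact ENNReal.inv_le_inv.mpr
          (ENNReal.rpow_le_rpow (ENNReal.ofReal_le_ofReal hs.2.le) hθ0.le)
      · rw [Set.indicator_of_notMem hs]; exact zero_le
    have h5 : (∫⁻ s, Set.indicator (Set.Ioo t (2*t)) (fun _ => c) s ∂haarMeas)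
        = c * haarMeas (Set.Ioo t (2*t)) := by
      rw [lintegral_indicator_const hmeas]
    have hμdef : haarMeas
        = (volume.restrict (Set.Ioi (0:ℝ))).withDensity fun s => ENNReal.ofReal s⁻¹ := rfl
    have h6 : ENNReal.ofReal (2*t)⁻¹ * ENNReal.ofReal t ≤ haarMeas (Set.Ioo t (2*t)) := by
      rw [hμdef, withDensity_apply _ hmeas, Measure.restrict_restrict hmeas]
      have hsub : Set.Ioo t (2*t) ∩ Set.Ioi 0 = Set.Ioo t (2*t) := by
        rw [Set.inter_eq_left]
        intro s hs
        exact lt_trans ht hs.1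
      rw [hsub]
      have h7 : ∫⁻ s in Set.Ioo t (2*t), ENNReal.ofReal (2*t)⁻¹ ∂volume
          ≤ ∫⁻ s in Set.Ioo t (2*t), ENNReal.ofReal s⁻¹ ∂volume := by
        refine setLIntegral_mono (by fun_prop) ?_
        intro s hs
        exact ENNReal.ofReal_le_ofReal (inv_anti₀ (lt_trans ht hs.1) hs.2.le)
      calc ENNReal.ofReal (2*t)⁻¹ * ENNReal.ofReal t
          = ∫⁻ _ in Set.Ioo t (2*t), ENNReal.ofReal (2*t)⁻¹ ∂volume := by
            rw [setLIntegral_const, Real.volume_Ioo, show 2*t - t = t by ring]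
        _ ≤ _ := h7
    have hle : c * (ENNReal.ofReal (2*t)⁻¹ * ENNReal.ofReal t) ≤ (ENNReal.ofReal R) ^ q := by
      calc c * (ENNReal.ofReal (2*t)⁻¹ * ENNReal.ofReal t)
          ≤ c * haarMeas (Set.Ioo t (2*t)) := mul_le_mul_right h6 _
        _ = _ := h5.symm
        _ ≤ (∫⁻ s, ((ENNReal.ofReal s) ^ (-θ) * K s) ^ q ∂haarMeas) := lintegral_mono h3
        _ ≤ _ := hint
    have hhalf : ENNReal.ofReal (2*t)⁻¹ * ENNReal.ofReal t = 2⁻¹ := by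
      rw [← ENNReal.ofReal_mul (by positivity)]
      have heq : (2*t)⁻¹ * t = 2⁻¹ := by
        field_simp
      rw [heq, ENNReal.ofReal_inv_of_pos two_pos, ENNReal.ofReal_ofNat]
    rw [hhalf] at hle
    have hc2 : c ≤ (2 * ENNReal.ofReal R) ^ q := by
      have h8 : c ≤ (ENNReal.ofReal R) ^ q * 2 := by
        have h9 := mul_le_mul_left hle 2
        rwa [mul_assoc, ENNReal.inv_mul_cancel (by norm_num) (by norm_num), mul_one] at h9
      calc c ≤ (ENNReal.ofReal R) ^ q * 2 := h8
        _ ≤ (ENNReal.ofReal R) ^ q * 2 ^ q := by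
            refine mul_le_mul_right ?_ _
            calc (2:ℝ≥0∞) = 2 ^ (1:ℝ) := (ENNReal.rpow_one 2).symm
              _ ≤ 2 ^ q := ENNReal.rpow_le_rpow_of_exponent_le one_le_two hq1
        _ = (2 * ENNReal.ofReal R) ^ q := by
            rw [ENNReal.mul_rpow_of_nonneg _ _ hq0.le, mul_comm]
    have hc3 : (ENNReal.ofReal (2*t)) ^ (-θ) * K t ≤ 2 * ENNReal.ofReal R := by
      have h9 := ENNReal.rpow_le_rpow hc2 (by positivity : (0:ℝ) ≤ 1/q)
      rwa [hc, ← ENNReal.rpow_mul, ← ENNReal.rpow_mul, mul_one_div, div_self hq0.ne',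
        ENNReal.rpow_one, ENNReal.rpow_one] at h9
    have hK4 : K t ≤ (ENNReal.ofReal (2*t)) ^ θ * (2 * ENNReal.ofReal R) := by
      have h10 : K t = (ENNReal.ofReal (2*t)) ^ θ * ((ENNReal.ofReal (2*t)) ^ (-θ) * K t) := by
        rw [← mul_assoc, ← ENNReal.rpow_add _ _ h2tne h2tnt]
        simp
      rw [h10]
      exact mul_le_mul_right hc3 _
    refine hK4.trans ?_
    have h11 : (ENNReal.ofReal (2*t)) ^ θ ≤ 2 * (ENNReal.ofReal t) ^ θ := by
      rw [ENNReal.ofReal_mul (by norm_num), ENNReal.ofReal_ofNat,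
        ENNReal.mul_rpow_of_nonneg _ _ hθ0.le]
      refine mul_le_mul_left ?_ _
      calc (2:ℝ≥0∞) ^ θ ≤ 2 ^ (1:ℝ) := ENNReal.rpow_le_rpow_of_exponent_le one_le_two hθ1.le
        _ = 2 := ENNReal.rpow_one 2
    calc (ENNReal.ofReal (2*t)) ^ θ * (2 * ENNReal.ofReal R)
        ≤ (2 * (ENNReal.ofReal t) ^ θ) * (2 * ENNReal.ofReal R) := mul_le_mul_left h11 _
      _ = 4 * ENNReal.ofReal t ^ θ * ENNReal.ofReal R := by ring

end CoupleNorm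

end Aux

/-- nonlinear Lions–Peetre lemma, compactness into `B0 + B1`. -/
theorem stmt3 {X Y : Type*} [AddCommGroup X] [Module ℝ X] [AddCommGroup Y] [Module ℝ Y]
    (A0 A1 : CoupleNorm X) (B0 B1 : CoupleNorm Y)
    (hA : CoupleNorm.Embeds A0 A1)
    (T : X → Y) (C0 C1 : ℝ) (hC0 : 0 < C0) (hC1 : 0 < C1)
    (hT0 : ∀ a : X, B0.N (T a) ≤ ENNReal.ofReal C0 * A0.N a)
    (hT1 : ∀ a a' : X, A1.N a < ∞ → A1.N a' < ∞ →
      B1.N (T a - T a') ≤ ENNReal.ofReal C1 * A1.N (a - a'))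
    (hcpt : ∀ S : Set X, CoupleNorm.BddWith A0.N S →
      CoupleNorm.RelCompactWith B0.N (T '' S)) :
    ∀ θ : ℝ, 0 < θ → θ < 1 → ∀ p : ℝ≥0∞, 1 ≤ p →
      ∀ M : Set X, CoupleNorm.BddWith (CoupleNorm.interpNorm A0 A1 θ p) M →
        CoupleNorm.RelCompactWith (CoupleNorm.Kfun B0 B1 1) (T '' M) := by
  intro θ hθ0 hθ1 p hp M hM u hu
  obtain ⟨R, hR⟩ := hM
  have hu' : ∀ n, ∃ a, a ∈ M ∧ T a = u n := fun n => hu n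
  choose mm hmmM hmmT using hu'
  obtain ⟨ce, hce, hceN⟩ := hA
  -- K-functional bounds for elements of M
  have Kb : ∀ n, ∀ t : ℝ, 0 < t →
      CoupleNorm.Kfun A0 A1 t (mm n) ≤ 4 * ENNReal.ofReal t ^ θ * ENNReal.ofReal R :=
    fun n t ht => CoupleNorm.Kfun_le_of_interpNorm_le A0 A1 hθ0 hθ1 hp (hR _ (hmmM n)) ht
  set C : ℝ≥0∞ := 4 * ENNReal.ofReal R + 1 with hC
  have hCne : C ≠ ∞ := by
    rw [hC]
    exact ENNReal.add_ne_top.mpr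
      ⟨ENNReal.mul_ne_top (by norm_num) ENNReal.ofReal_ne_top, ENNReal.one_ne_top⟩
  -- decompositions at t = k+1
  have hdec : ∀ k n : ℕ, ∃ y : X, A0.N y ≤ ENNReal.ofReal ((k:ℝ)+1) ^ θ * C ∧
      A1.N (mm n - y) ≤ ENNReal.ofReal ((k:ℝ)+1) ^ (θ - 1) * C := by
    intro k n
    have htk : (0:ℝ) < (k:ℝ)+1 := by positivity
    have hbne : ENNReal.ofReal ((k:ℝ)+1) ≠ 0 := (ENNReal.ofReal_pos.mpr htk).ne'
    have hbnt : ENNReal.ofReal ((k:ℝ)+1) ≠ ∞ := ENNReal.ofReal_ne_top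
    have hKlt : CoupleNorm.Kfun A0 A1 ((k:ℝ)+1) (mm n)
        < ENNReal.ofReal ((k:ℝ)+1) ^ θ * C := by
      refine lt_of_le_of_lt (Kb n _ htk) ?_
      rw [hC, mul_add, mul_one]
      have heq : 4 * ENNReal.ofReal ((k:ℝ)+1) ^ θ * ENNReal.ofReal R
          = ENNReal.ofReal ((k:ℝ)+1) ^ θ * (4 * ENNReal.ofReal R) := by ring
      rw [heq]
      refine ENNReal.lt_add_right ?_ ?_
      · exact ENNReal.mul_ne_top (ENNReal.rpow_ne_top_of_nonneg hθ0.le hbnt)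
          (ENNReal.mul_ne_top (by norm_num) ENNReal.ofReal_ne_top)
      · exact (ENNReal.rpow_pos (ENNReal.ofReal_pos.mpr htk) hbnt).ne'
    rw [CoupleNorm.Kfun] at hKlt
    obtain ⟨y, hy⟩ := iInf_lt_iff.mp hKlt
    refine ⟨y, le_of_lt (lt_of_le_of_lt (le_add_right le_rfl) hy), ?_⟩
    have h1 : ENNReal.ofReal ((k:ℝ)+1) * A1.N (mm n - y)
        ≤ ENNReal.ofReal ((k:ℝ)+1) ^ θ * C :=
      le_of_lt (lt_of_le_of_lt (le_add_left le_rfl) hy)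
    have h2 : A1.N (mm n - y)
        = (ENNReal.ofReal ((k:ℝ)+1))⁻¹ * (ENNReal.ofReal ((k:ℝ)+1) * A1.N (mm n - y)) := by
      rw [← mul_assoc, ENNReal.inv_mul_cancel hbne hbnt, one_mul]
    rw [h2]
    calc (ENNReal.ofReal ((k:ℝ)+1))⁻¹ * (ENNReal.ofReal ((k:ℝ)+1) * A1.N (mm n - y))
        ≤ (ENNReal.ofReal ((k:ℝ)+1))⁻¹ * (ENNReal.ofReal ((k:ℝ)+1) ^ θ * C) :=
          mul_le_mul_right h1 _
      _ = ENNReal.ofReal ((k:ℝ)+1) ^ (θ-1) * C := by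
          rw [← mul_assoc, ← ENNReal.rpow_neg_one, ← ENNReal.rpow_add _ _ hbne hbnt,
            show (-1) + θ = θ - 1 by ring]
  choose y hy0 hy1 using hdec
  have hβne : ∀ k : ℕ, ENNReal.ofReal ((k:ℝ)+1) ^ θ * C ≠ ∞ := fun k =>
    ENNReal.mul_ne_top (ENNReal.rpow_ne_top_of_nonneg hθ0.le ENNReal.ofReal_ne_top) hCne
  have hγle : ∀ k : ℕ, ENNReal.ofReal ((k:ℝ)+1) ^ (θ-1) * C ≤ C := by
    intro k
    have hb1 : (1:ℝ≥0∞) ≤ ENNReal.ofReal ((k:ℝ)+1) := by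
      rw [← ENNReal.ofReal_one]
      exact ENNReal.ofReal_le_ofReal (by push_cast; linarith [Nat.cast_nonneg (α := ℝ) k])
    have : ENNReal.ofReal ((k:ℝ)+1) ^ (θ-1) ≤ 1 := by
      rw [show θ - 1 = -(1-θ) by ring, ENNReal.rpow_neg]
      exact ENNReal.inv_le_one.mpr (ENNReal.one_le_rpow hb1 (by linarith))
    calc ENNReal.ofReal ((k:ℝ)+1) ^ (θ-1) * C ≤ 1 * C := mul_le_mul_left this _
      _ = C := one_mul C
  -- finiteness in A1
  have hA1y : ∀ k n, A1.N (y k n) < ∞ := by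
    intro k n
    refine lt_of_le_of_lt (hceN _) ?_
    refine lt_of_le_of_lt (mul_le_mul_right (hy0 k n) _) ?_
    exact ENNReal.mul_lt_top ENNReal.ofReal_lt_top (lt_top_iff_ne_top.mpr (hβne k))
  have hA1mm : ∀ n, A1.N (mm n) < ∞ := by
    intro n
    have h1 : A1.N (mm n) ≤ A1.N (y 0 n) + A1.N (mm n - y 0 n) := by
      have h := A1.add_le (y 0 n) (mm n - y 0 n)
      simpa using h
    refine lt_of_le_of_lt h1 (ENNReal.add_lt_top.mpr ⟨hA1y 0 n, ?_⟩)
    exact lt_of_le_of_lt (le_trans (hy1 0 n) (hγle 0)) (lt_top_iff_ne_top.mpr hCne)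
  -- compactness of the pieces
  have hSk : ∀ k : ℕ, CoupleNorm.RelCompactWith B0.N
      (T '' {z : X | A0.N z ≤ ENNReal.ofReal ((k:ℝ)+1) ^ θ * C}) := by
    intro k
    refine hcpt _ ⟨(ENNReal.ofReal ((k:ℝ)+1) ^ θ * C).toReal, fun z hz => ?_⟩
    rw [ENNReal.ofReal_toReal (hβne k)]
    exact hz
  -- pairwise small extractions
  have ext : ∀ (k : ℕ) (ρ : ℕ → ℕ), StrictMono ρ →
      ∃ σ : ℕ → ℕ, StrictMono σ ∧ ∀ i j,
        B0.N (T (y k (ρ (σ i))) - T (y k (ρ (σ j)))) ≤ 2⁻¹ ^ k := by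
    intro k ρ hρ
    obtain ⟨σ0, b, hσ0, hconv⟩ := hSk k (fun n => T (y k (ρ n)))
      (fun n => ⟨y k (ρ n), hy0 k (ρ n), rfl⟩)
    rw [ENNReal.tendsto_atTop_zero] at hconv
    have hhpos : (0:ℝ≥0∞) < 2⁻¹ ^ k / 2 :=
      ENNReal.div_pos (ENNReal.pow_pos (by norm_num) k).ne' (by norm_num)
    obtain ⟨Nk, hNk⟩ := hconv _ hhpos
    refine ⟨fun i => σ0 (i + Nk), hσ0.comp (fun a b hab => by omega), fun i j => ?_⟩
    have hsplit : T (y k (ρ (σ0 (i+Nk)))) - T (y k (ρ (σ0 (j+Nk))))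
        = (T (y k (ρ (σ0 (i+Nk)))) - b) + -(T (y k (ρ (σ0 (j+Nk)))) - b) := by abel
    calc B0.N (T (y k (ρ (σ0 (i+Nk)))) - T (y k (ρ (σ0 (j+Nk)))))
        ≤ B0.N (T (y k (ρ (σ0 (i+Nk)))) - b) + B0.N (-(T (y k (ρ (σ0 (j+Nk)))) - b)) := by
          rw [hsplit]; exact B0.add_le _ _
      _ = B0.N (T (y k (ρ (σ0 (i+Nk)))) - b) + B0.N (T (y k (ρ (σ0 (j+Nk)))) - b) := by
          rw [CoupleNorm.N_neg]
      _ ≤ 2⁻¹ ^ k / 2 + 2⁻¹ ^ k / 2 :=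
          add_le_add (hNk (i+Nk) (by omega)) (hNk (j+Nk) (by omega))
      _ = 2⁻¹ ^ k := ENNReal.add_halves _
  obtain ⟨τ, hτ, hτgood⟩ := CoupleNorm.diag
    (good := fun k a b => B0.N (T (y k a) - T (y k b)) ≤ 2⁻¹ ^ k) ext
  -- the subsequence u ∘ τ is Cauchy in the sum norm
  have hwC : ∀ ε : ℝ≥0∞, 0 < ε → ∃ Nn, ∀ m n, Nn ≤ m → Nn ≤ n →
      CoupleNorm.Kfun B0 B1 1 (u (τ m) - u (τ n)) < ε := by
    intro ε hε
    set δ : ℝ≥0∞ := min ε 1 / 2 with hδdef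
    have hδpos : 0 < δ :=
      ENNReal.div_pos (lt_min hε one_pos).ne' (by norm_num)
    have hδ2 : δ + δ ≤ ε := by
      rw [hδdef, ENNReal.add_halves]
      exact min_le_left _ _
    set D : ℝ≥0∞ := 2 * ENNReal.ofReal C1 * C with hD
    have hDne : D ≠ ∞ := by
      rw [hD]
      exact ENNReal.mul_ne_top (ENNReal.mul_ne_top (by norm_num) ENNReal.ofReal_ne_top) hCne
    -- choose k1 for the geometric part
    have hδne : δ ≠ ∞ := by
      refine ne_top_of_le_ne_top ENNReal.one_ne_top ?_
      calc δ ≤ min ε 1 := by rw [hδdef]; exact ENNReal.half_le_self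
        _ ≤ 1 := min_le_right _ _
    obtain ⟨k1, hk1⟩ := ENNReal.exists_inv_two_pow_lt hδpos.ne'
    -- choose k2 for the γ part
    have hk2 : ∃ k2 : ℕ, D * ENNReal.ofReal ((k2:ℝ)+1) ^ (θ-1) < δ := by
      by_cases hD0 : D = 0
      · exact ⟨0, by rw [hD0, zero_mul]; exact hδpos⟩
      · have hr : (0:ℝ) < (δ / D).toReal := by
          refine ENNReal.toReal_pos ?_ ?_
          · exact (ENNReal.div_pos hδpos.ne' hDne).ne'
          · exact (ENNReal.div_lt_top hδne hD0).ne
        have htend : Tendsto (fun k : ℕ => ((k:ℝ)+1) ^ (θ-1)) atTop (𝓝 0) := by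
          have h1 := tendsto_rpow_neg_atTop (show (0:ℝ) < 1-θ by linarith)
          have h2 : Tendsto (fun k : ℕ => (k:ℝ)+1) atTop atTop :=
            tendsto_atTop_add_const_right _ 1 tendsto_natCast_atTop_atTop
          have h3 := h1.comp h2
          simpa [Function.comp_def, show -(1-θ) = θ-1 by ring] using h3
        obtain ⟨k2, hk2'⟩ := (htend.eventually (eventually_lt_nhds hr)).exists
        refine ⟨k2, ?_⟩
        have hpos : (0:ℝ) < (k2:ℝ)+1 := by positivity
        have h4 : ENNReal.ofReal ((k2:ℝ)+1) ^ (θ-1) < δ / D := by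
          rw [ENNReal.ofReal_rpow_of_pos hpos]
          calc ENNReal.ofReal (((k2:ℝ)+1) ^ (θ-1))
              < ENNReal.ofReal ((δ / D).toReal) := by
                refine ENNReal.ofReal_lt_ofReal_iff hr |>.mpr hk2'
            _ = δ / D := ENNReal.ofReal_toReal (ENNReal.div_lt_top hδne hD0).ne
        calc D * ENNReal.ofReal ((k2:ℝ)+1) ^ (θ-1) < D * (δ / D) := by
              refine ENNReal.mul_lt_mul_right hD0 hDne h4
          _ = δ := ENNReal.mul_div_cancel hD0 hDne
    obtain ⟨k2, hk2⟩ := hk2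
    set k : ℕ := max k1 k2 with hk
    refine ⟨k, fun m n hm hn => ?_⟩
    have hgood := hτgood k m n hm hn
    have hsplit : u (τ m) - u (τ n) = (T (y k (τ m)) - T (y k (τ n)))
        + ((T (mm (τ m)) - T (y k (τ m))) - (T (mm (τ n)) - T (y k (τ n)))) := by
      rw [← hmmT (τ m), ← hmmT (τ n)]
      abel
    have hB1 : ∀ j, B1.N (T (mm (τ j)) - T (y k (τ j)))
        ≤ ENNReal.ofReal C1 * (ENNReal.ofReal ((k:ℝ)+1) ^ (θ-1) * C) := fun j =>
      le_trans (hT1 _ _ (hA1mm _) (hA1y _ _)) (mul_le_mul_right (hy1 k (τ j)) _)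
    have hγanti : ENNReal.ofReal ((k:ℝ)+1) ^ (θ-1) ≤ ENNReal.ofReal ((k2:ℝ)+1) ^ (θ-1) := by
      rw [show θ - 1 = -(1-θ) by ring, ENNReal.rpow_neg, ENNReal.rpow_neg]
      refine ENNReal.inv_le_inv.mpr ?_
      refine ENNReal.rpow_le_rpow (ENNReal.ofReal_le_ofReal ?_) (by linarith)
      have : (k2:ℝ) ≤ (k:ℝ) := by exact_mod_cast le_max_right k1 k2
      linarith
    calc CoupleNorm.Kfun B0 B1 1 (u (τ m) - u (τ n))
        ≤ B0.N (T (y k (τ m)) - T (y k (τ n)))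
          + B1.N ((T (mm (τ m)) - T (y k (τ m))) - (T (mm (τ n)) - T (y k (τ n)))) := by
          rw [hsplit]; exact CoupleNorm.Kfun_add_le B0 B1 _ _
      _ ≤ 2⁻¹ ^ k + (B1.N (T (mm (τ m)) - T (y k (τ m)))
            + B1.N (T (mm (τ n)) - T (y k (τ n)))) := by
          refine add_le_add hgood ?_
          have h1 : (T (mm (τ m)) - T (y k (τ m))) - (T (mm (τ n)) - T (y k (τ n)))
              = (T (mm (τ m)) - T (y k (τ m))) + -(T (mm (τ n)) - T (y k (τ n))) := by abel
          rw [h1]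
          exact le_trans (B1.add_le _ _) (by rw [CoupleNorm.N_neg])
      _ ≤ 2⁻¹ ^ k + D * ENNReal.ofReal ((k:ℝ)+1) ^ (θ-1) := by
          refine add_le_add_right ?_ _
          calc B1.N (T (mm (τ m)) - T (y k (τ m))) + B1.N (T (mm (τ n)) - T (y k (τ n)))
              ≤ ENNReal.ofReal C1 * (ENNReal.ofReal ((k:ℝ)+1) ^ (θ-1) * C)
                + ENNReal.ofReal C1 * (ENNReal.ofReal ((k:ℝ)+1) ^ (θ-1) * C) :=
                add_le_add (hB1 m) (hB1 n)
            _ = D * ENNReal.ofReal ((k:ℝ)+1) ^ (θ-1) := by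
                rw [hD]; ring
      _ ≤ 2⁻¹ ^ k1 + D * ENNReal.ofReal ((k2:ℝ)+1) ^ (θ-1) := by
          refine add_le_add ?_ (mul_le_mul_right hγanti _)
          exact pow_le_pow_right_of_le_one' (by norm_num) (le_max_left k1 k2)
      _ < δ + δ := ENNReal.add_lt_add hk1 hk2
      _ ≤ ε := hδ2
  obtain ⟨τ', xx, hτ', hconv'⟩ := CoupleNorm.exists_limit B0 B1 (fun n => u (τ n)) hwC
  exact ⟨τ ∘ τ', xx, hτ.comp hτ', hconv'⟩
end

section
/- Let $(A_0,A_1)$ be a Banach couple with $A_0\subset A_1$, let $B$ be a Banach space, and let $T:A_1\to B$ satisfy $\|Ta\|_{B}\le C_0\|a\|_{A_0}$ for all $a\in A_0$, $\|Ta-Ta'\|_{B}\le C_1\|a-a'\|_{A_1}$ for all $a,a'\in A_1$, and $T$ maps bounded subsets of $A_0$ to relatively compact subsets of $B$. Then for each $\theta\in(0,1)$ and $p\in[1,\infty]$, $T$ maps every bounded subset of $(A_0,A_1)_{\theta,p}$ to a relatively compact subset of $B$. -/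
open scoped ENNReal
open Filter Topology MeasureTheory

section AuxLemmas

open CoupleNorm

variable {X : Type*} [AddCommGroup X] [Module ℝ X]

lemma my_Kfun_mono (A0 A1 : CoupleNorm X) {s t : ℝ} (hst : s ≤ t) (x : X) :
    Kfun A0 A1 s x ≤ Kfun A0 A1 t x := by
  refine iInf_mono fun y => ?_
  have := ENNReal.ofReal_le_ofReal hst
  gcongr

lemma my_cancel {s θ : ℝ} (hs : 0 < s) {a b : ℝ≥0∞}
    (h : (ENNReal.ofReal s) ^ (-θ) * a ≤ b) : a ≤ (ENNReal.ofReal s) ^ θ * b := by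
  have h0 : ENNReal.ofReal s ≠ 0 := (ENNReal.ofReal_pos.mpr hs).ne'
  have h1 : (ENNReal.ofReal s) ^ θ * (ENNReal.ofReal s) ^ (-θ) = 1 := by
    rw [← ENNReal.rpow_add _ _ h0 ENNReal.ofReal_ne_top]; simp
  calc a = ((ENNReal.ofReal s) ^ θ * (ENNReal.ofReal s) ^ (-θ)) * a := by rw [h1, one_mul]
    _ = (ENNReal.ofReal s) ^ θ * ((ENNReal.ofReal s) ^ (-θ) * a) := mul_assoc _ _ _
    _ ≤ _ := mul_le_mul_right h _

lemma my_K_bound (A0 A1 : CoupleNorm X) {θ : ℝ} (hθ : 0 < θ) {p : ℝ≥0∞} (hp : 1 ≤ p)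
    {R : ℝ} (hR : 0 ≤ R) {x : X} (hx : interpNorm A0 A1 θ p x ≤ ENNReal.ofReal R)
    {s : ℝ} (hs : 0 < s) : Kfun A0 A1 s x ≤ ENNReal.ofReal (2 * (2 * s) ^ θ * R) := by
  have h2s : (0:ℝ) < 2 * s := by linarith
  have hsle : s ^ θ ≤ (2 * s) ^ θ := Real.rpow_le_rpow hs.le (by linarith) hθ.le
  have h2snn : (0:ℝ) ≤ (2 * s) ^ θ := Real.rpow_nonneg h2s.le θ
  by_cases hp' : p = ∞
  · rw [interpNorm, if_pos hp'] at hx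
    have h1 : (ENNReal.ofReal s) ^ (-θ) * Kfun A0 A1 s x ≤ ENNReal.ofReal R :=
      le_trans
        (le_iSup (fun t : {t : ℝ // 0 < t} =>
          (ENNReal.ofReal t.1) ^ (-θ) * Kfun A0 A1 t.1 x) ⟨s, hs⟩) hx
    calc Kfun A0 A1 s x ≤ (ENNReal.ofReal s) ^ θ * ENNReal.ofReal R := my_cancel hs h1
      _ = ENNReal.ofReal (s ^ θ * R) := by
          rw [ENNReal.ofReal_rpow_of_pos hs, ← ENNReal.ofReal_mul (Real.rpow_nonneg hs.le θ)]
      _ ≤ _ := ENNReal.ofReal_le_ofReal (by nlinarith)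
  · have hpt : 1 ≤ p.toReal := by
      rw [← ENNReal.toReal_one]
      exact ENNReal.toReal_mono hp' hp
    have hpt0 : 0 < p.toReal := lt_of_lt_of_le one_pos hpt
    rw [interpNorm, if_neg hp'] at hx
    set f : ℝ → ℝ≥0∞ := fun t => ((ENNReal.ofReal t) ^ (-θ) * Kfun A0 A1 t x) ^ p.toReal with hf
    have hI : ∫⁻ t, f t ∂haarMeas ≤ (ENNReal.ofReal R) ^ p.toReal := by
      have h2 := ENNReal.rpow_le_rpow hx hpt0.le
      rwa [one_div, ENNReal.rpow_inv_rpow hpt0.ne'] at h2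
    set c : ℝ≥0∞ := ((ENNReal.ofReal (2 * s)) ^ (-θ) * Kfun A0 A1 s x) ^ p.toReal with hc
    have hAsub : Set.Ioc s (2 * s) ⊆ Set.Ioi (0:ℝ) := fun t ht => lt_trans hs ht.1
    have hmeasA : ENNReal.ofReal (1/2) ≤ haarMeas (Set.Ioc s (2 * s)) := by
      rw [haarMeas, withDensity_apply _ measurableSet_Ioc,
        Measure.restrict_restrict measurableSet_Ioc, Set.inter_eq_left.mpr hAsub]
      calc ENNReal.ofReal (1/2)
          = ENNReal.ofReal ((2 * s)⁻¹) * volume (Set.Ioc s (2 * s)) := by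
            rw [Real.volume_Ioc, ← ENNReal.ofReal_mul (by positivity)]
            congr 1
            field_simp
            ring
        _ = ∫⁻ _ in Set.Ioc s (2 * s), ENNReal.ofReal ((2 * s)⁻¹) :=
            (setLIntegral_const _ _).symm
        _ ≤ ∫⁻ t in Set.Ioc s (2 * s), ENNReal.ofReal t⁻¹ := by
            refine setLIntegral_mono' measurableSet_Ioc fun t ht => ?_
            exact ENNReal.ofReal_le_ofReal
              (inv_anti₀ (lt_trans hs ht.1) ht.2)
    have hlow : c * ENNReal.ofReal (1/2) ≤ (ENNReal.ofReal R) ^ p.toReal := by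
      calc c * ENNReal.ofReal (1/2) ≤ c * haarMeas (Set.Ioc s (2 * s)) :=
            mul_le_mul_right hmeasA _
        _ = ∫⁻ _ in Set.Ioc s (2 * s), c ∂haarMeas := (setLIntegral_const _ _).symm
        _ ≤ ∫⁻ t in Set.Ioc s (2 * s), f t ∂haarMeas := by
            refine setLIntegral_mono' measurableSet_Ioc fun t ht => ?_
            refine ENNReal.rpow_le_rpow ?_ hpt0.le
            refine mul_le_mul' ?_ (my_Kfun_mono A0 A1 ht.1.le x)
            rw [ENNReal.rpow_neg, ENNReal.rpow_neg]
            exact ENNReal.inv_le_inv.mpr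
              (ENNReal.rpow_le_rpow (ENNReal.ofReal_le_ofReal ht.2) hθ.le)
        _ ≤ ∫⁻ t, f t ∂haarMeas := setLIntegral_le_lintegral _ _
        _ ≤ _ := hI
    have hc2 : c ≤ (ENNReal.ofReal R * 2) ^ p.toReal := by
      have h12 : (ENNReal.ofReal (1/2) : ℝ≥0∞) * 2 = 1 := by
        rw [show ((1:ℝ)/2) = (2:ℝ)⁻¹ by norm_num, ENNReal.ofReal_inv_of_pos two_pos]
        norm_num
        rw [ENNReal.inv_mul_cancel (by norm_num) (by norm_num)]
      have h2le : (2:ℝ≥0∞) ≤ 2 ^ p.toReal := by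
        calc (2:ℝ≥0∞) = 2 ^ (1:ℝ) := (ENNReal.rpow_one 2).symm
          _ ≤ 2 ^ p.toReal := ENNReal.rpow_le_rpow_of_exponent_le (by norm_num) hpt
      calc c = c * ENNReal.ofReal (1/2) * 2 := by rw [mul_assoc, h12, mul_one]
        _ ≤ (ENNReal.ofReal R) ^ p.toReal * 2 := mul_le_mul_left hlow _
        _ ≤ (ENNReal.ofReal R) ^ p.toReal * 2 ^ p.toReal := mul_le_mul_right h2le _
        _ = (ENNReal.ofReal R * 2) ^ p.toReal :=
            (ENNReal.mul_rpow_of_nonneg _ _ hpt0.le).symm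
    have hc3 : (ENNReal.ofReal (2 * s)) ^ (-θ) * Kfun A0 A1 s x ≤ ENNReal.ofReal R * 2 := by
      have := ENNReal.rpow_le_rpow hc2 (inv_pos.mpr hpt0).le
      rwa [hc, ENNReal.rpow_rpow_inv hpt0.ne', ENNReal.rpow_rpow_inv hpt0.ne'] at this
    calc Kfun A0 A1 s x ≤ (ENNReal.ofReal (2 * s)) ^ θ * (ENNReal.ofReal R * 2) :=
          my_cancel h2s hc3
      _ = ENNReal.ofReal (2 * (2 * s) ^ θ * R) := by
          rw [ENNReal.ofReal_rpow_of_pos h2s,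
            show (2:ℝ≥0∞) = ENNReal.ofReal 2 by norm_num,
            ← ENNReal.ofReal_mul hR, ← ENNReal.ofReal_mul h2snn]
          ring_nf

end AuxLemmas

/-- nonlinear Lions–Peetre lemma in the case `B0 = B1 = B`. -/
theorem stmt4 {X : Type*} [AddCommGroup X] [Module ℝ X]
    {B : Type*} [NormedAddCommGroup B] [NormedSpace ℝ B] [CompleteSpace B]
    (A0 A1 : CoupleNorm X) (hA : CoupleNorm.Embeds A0 A1)
    (T : X → B) (C0 C1 : ℝ) (hC0 : 0 < C0) (hC1 : 0 < C1)
    (hT0 : ∀ a : X, ENNReal.ofReal ‖T a‖ ≤ ENNReal.ofReal C0 * A0.N a)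
    (hT1 : ∀ a a' : X, A1.N a < ∞ → A1.N a' < ∞ →
      ENNReal.ofReal ‖T a - T a'‖ ≤ ENNReal.ofReal C1 * A1.N (a - a'))
    (hcpt : ∀ S : Set X, CoupleNorm.BddWith A0.N S → IsCompact (closure (T '' S))) :
    ∀ θ : ℝ, 0 < θ → θ < 1 → ∀ p : ℝ≥0∞, 1 ≤ p →
      ∀ M : Set X, CoupleNorm.BddWith (CoupleNorm.interpNorm A0 A1 θ p) M →
        IsCompact (closure (T '' M)) := by
  intro θ hθ0 hθ1 p hp M hM
  obtain ⟨R0, hMR⟩ := hM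
  set R : ℝ := max R0 0 with hRdef
  have hR : 0 ≤ R := le_max_right _ _
  have hMR' : ∀ x ∈ M, CoupleNorm.interpNorm A0 A1 θ p x ≤ ENNReal.ofReal R :=
    fun x hx => (hMR x hx).trans (ENNReal.ofReal_le_ofReal (le_max_left _ _))
  obtain ⟨ce, hce, hcle⟩ := hA
  have htb : TotallyBounded (T '' M) := by
    rw [Metric.totallyBounded_iff]
    intro ε hε
    have l1 : Tendsto (fun t : ℝ => C1 * (2 * 2 ^ θ * R) * t ^ (θ - 1)) atTop (𝓝 0) := by
      have h := (tendsto_rpow_neg_atTop (y := 1 - θ) (by linarith)).const_mul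
        (C1 * (2 * 2 ^ θ * R))
      simpa [neg_sub] using h
    have l2 : Tendsto (fun t : ℝ => C1 * t⁻¹) atTop (𝓝 0) := by
      simpa using tendsto_inv_atTop_zero.const_mul C1
    have l3 : Tendsto (fun t : ℝ => C1 * (2 * 2 ^ θ * R) * t ^ (θ - 1) + C1 * t⁻¹)
        atTop (𝓝 0) := by simpa using l1.add l2
    have l4 : ∀ᶠ t : ℝ in atTop,
        C1 * (2 * 2 ^ θ * R) * t ^ (θ - 1) + C1 * t⁻¹ < ε / 2 :=
      l3.eventually (gt_mem_nhds (by linarith))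
    obtain ⟨t, hterr, ht1⟩ := (l4.and (eventually_ge_atTop 1)).exists
    have ht0 : (0:ℝ) < t := lt_of_lt_of_le one_pos ht1
    have h2t : (0:ℝ) < 2 * t := by linarith
    have hrp : 0 ≤ (2 * t) ^ θ := Real.rpow_nonneg h2t.le θ
    set Kt : ℝ := 2 * (2 * t) ^ θ * R + 1 with hKt
    have hKtpos : 0 < Kt := by nlinarith
    have herr : C1 * (Kt / t) < ε / 2 := by
      have h1 : (2 * t) ^ θ = 2 ^ θ * t ^ θ := Real.mul_rpow (by norm_num) ht0.le
      have h2 : t ^ (θ - 1) = t ^ θ / t := by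
        rw [Real.rpow_sub ht0, Real.rpow_one]
      calc C1 * (Kt / t) = C1 * (2 * 2 ^ θ * R) * t ^ (θ - 1) + C1 * t⁻¹ := by
            rw [hKt, h1, h2]; field_simp
        _ < ε / 2 := hterr
    set S : Set X := {y | A0.N y ≤ ENNReal.ofReal Kt} with hS
    have hcS : IsCompact (closure (T '' S)) := hcpt S ⟨Kt, fun y hy => hy⟩
    have htbS : TotallyBounded (T '' S) := (hcS.totallyBounded).subset subset_closure
    obtain ⟨F, hFfin, hFcov⟩ := Metric.totallyBounded_iff.mp htbS (ε / 2) (by linarith)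
    refine ⟨F, hFfin, ?_⟩
    rintro b ⟨x, hxM, rfl⟩
    have hKx : CoupleNorm.Kfun A0 A1 t x ≤ ENNReal.ofReal (2 * (2 * t) ^ θ * R) :=
      my_K_bound A0 A1 hθ0 hp hR (hMR' x hxM) ht0
    have hKlt : CoupleNorm.Kfun A0 A1 t x < ENNReal.ofReal Kt :=
      lt_of_le_of_lt hKx ((ENNReal.ofReal_lt_ofReal_iff hKtpos).mpr (by linarith))
    rw [CoupleNorm.Kfun] at hKlt
    obtain ⟨y, hy⟩ := iInf_lt_iff.mp hKlt
    have h0y : A0.N y ≤ ENNReal.ofReal Kt := le_trans le_self_add hy.le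
    have h1y : ENNReal.ofReal t * A1.N (x - y) ≤ ENNReal.ofReal Kt :=
      le_trans le_add_self hy.le
    have hz : A1.N (x - y) ≤ ENNReal.ofReal (Kt / t) := by
      have h0 : ENNReal.ofReal t ≠ 0 := (ENNReal.ofReal_pos.mpr ht0).ne'
      have hcancel : (ENNReal.ofReal t)⁻¹ * ENNReal.ofReal t = 1 :=
        ENNReal.inv_mul_cancel h0 ENNReal.ofReal_ne_top
      calc A1.N (x - y) = (ENNReal.ofReal t)⁻¹ * (ENNReal.ofReal t * A1.N (x - y)) := by
            rw [← mul_assoc, hcancel, one_mul]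
        _ ≤ (ENNReal.ofReal t)⁻¹ * ENNReal.ofReal Kt := mul_le_mul_right h1y _
        _ = ENNReal.ofReal (Kt / t) := by
            rw [← ENNReal.ofReal_inv_of_pos ht0,
              ← ENNReal.ofReal_mul (inv_nonneg.mpr ht0.le), inv_mul_eq_div]
    have hyfin : A1.N y < ∞ := by
      refine lt_of_le_of_lt ((hcle y).trans (mul_le_mul_right h0y _)) ?_
      exact ENNReal.mul_lt_top ENNReal.ofReal_lt_top ENNReal.ofReal_lt_top
    have hzfin : A1.N (x - y) < ∞ := lt_of_le_of_lt hz ENNReal.ofReal_lt_top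
    have hxfin : A1.N x < ∞ := by
      have hxe : x = y + (x - y) := by abel
      calc A1.N x = A1.N (y + (x - y)) := by rw [← hxe]
        _ ≤ A1.N y + A1.N (x - y) := A1.add_le _ _
        _ < ∞ := ENNReal.add_lt_top.mpr ⟨hyfin, hzfin⟩
    have hTclose : ‖T x - T y‖ ≤ C1 * (Kt / t) := by
      have h := (hT1 x y hxfin hyfin).trans (mul_le_mul_right hz _)
      rw [← ENNReal.ofReal_mul hC1.le] at h
      exact (ENNReal.ofReal_le_ofReal_iff
        (mul_nonneg hC1.le (div_nonneg hKtpos.le ht0.le))).mp h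
    have hTyS : T y ∈ T '' S := ⟨y, h0y, rfl⟩
    obtain ⟨b, hbF, hby⟩ := Set.mem_iUnion₂.mp (hFcov hTyS)
    refine Set.mem_iUnion₂.mpr ⟨b, hbF, ?_⟩
    rw [Metric.mem_ball] at hby ⊢
    calc dist (T x) b ≤ dist (T x) (T y) + dist (T y) b := dist_triangle _ _ _
      _ < ε / 2 + ε / 2 := by
          refine add_lt_add_of_le_of_lt ?_ hby
          rw [dist_eq_norm]
          exact (lt_of_le_of_lt hTclose herr).le
      _ = ε := by ring
  exact TotallyBounded.isCompact_of_isClosed htb.closure isClosed_closure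
end

section
/- Let $(\Omega,\mu)$ be a finite measure space and $1\le p_0,p_1\le\infty$ with $p_0<\infty$ or $\mu$ finite. Then the couple $(L^{p_0}(\mu),L^{p_1}(\mu))$ satisfies Persson's condition (H): for each compact subset $K$ of $L^{p_0}(\mu)$ and each $\varepsilon>0$ there exists a linear operator $P$, given by conditional expectation onto a finite measurable partition of $\Omega$, such that $\|Pf\|_{L^{p_j}}\le\|f\|_{L^{p_j}}$ for all $f\in L^{p_j}$, $j=0,1$, $P$ maps $L^{p_0}+L^{p_1}$ into $L^{p_0}\cap L^{p_1}$, and $\|Pf-f\|_{L^{p_0}}<\varepsilon$ for all $f\in K$. -/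
open scoped ENNReal
open Filter Topology MeasureTheory

section helpers
variable {Ω : Type*} {M : Type*} [AddCommMonoid M] {n : ℕ} {E : Fin n → Set Ω}

lemma sum_ind_eq (hd : Pairwise (Function.onFun Disjoint E)) (c : Fin n → M) {ω : Ω} {i : Fin n}
    (hω : ω ∈ E i) : ∑ i', (E i').indicator (fun _ => c i') ω = c i := by
  rw [Finset.sum_eq_single i]
  · exact Set.indicator_of_mem hω _
  · intro j _ hj
    exact Set.indicator_of_notMem (fun hωj => (Set.disjoint_left.1 (hd hj) hωj) hω) _
  · intro hi; exact absurd (Finset.mem_univ i) hi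

lemma sum_ind_zero (c : Fin n → M) {ω : Ω} (h : ∀ i, ω ∉ E i) :
    ∑ i', (E i').indicator (fun _ => c i') ω = 0 :=
  Finset.sum_eq_zero fun j _ => Set.indicator_of_notMem (h j) _

end helpers

lemma atom_bound {Ω : Type*} [MeasurableSpace Ω] (μ : Measure Ω) {p : ℝ≥0∞} (hp : 1 ≤ p)
    {A : Set Ω} (hA0 : μ A ≠ 0) (hAfin : μ A ≠ ∞) (f : Ω → ℝ) :
    (‖(∫ x in A, f x ∂μ) / (μ A).toReal‖₊ : ℝ≥0∞) * μ A ^ (1 / p.toReal)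
      ≤ eLpNorm f p (μ.restrict A) := by
  by_cases hint : IntegrableOn f A μ
  · have hc : (0:ℝ) < (μ A).toReal := ENNReal.toReal_pos hA0 hAfin
    have h1 : (‖(∫ x in A, f x ∂μ)‖₊ : ℝ≥0∞) ≤ eLpNorm f 1 (μ.restrict A) := by
      rw [eLpNorm_one_eq_lintegral_enorm]; exact enorm_integral_le_lintegral_enorm _
    have h2 : eLpNorm f 1 (μ.restrict A) ≤ eLpNorm f p (μ.restrict A) * μ A ^ (1 - 1 / p.toReal) := by
      have := eLpNorm_le_eLpNorm_mul_rpow_measure_univ (μ := μ.restrict A) hp hint.1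
      simpa [Measure.restrict_apply_univ] using this
    have hnorm : (‖(∫ x in A, f x ∂μ) / (μ A).toReal‖₊ : ℝ≥0∞)
        = (‖(∫ x in A, f x ∂μ)‖₊ : ℝ≥0∞) * (μ A)⁻¹ := by
      rw [nnnorm_div, ENNReal.coe_div (nnnorm_ne_zero_iff.2 hc.ne'),
        ← enorm_eq_nnnorm ((μ A).toReal), Real.enorm_eq_ofReal hc.le, ENNReal.ofReal_toReal hAfin, div_eq_mul_inv]
    calc (‖(∫ x in A, f x ∂μ) / (μ A).toReal‖₊ : ℝ≥0∞) * μ A ^ (1 / p.toReal)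
        = (‖(∫ x in A, f x ∂μ)‖₊ : ℝ≥0∞) * ((μ A)⁻¹ * μ A ^ (1 / p.toReal)) := by
          rw [hnorm]; ring
      _ ≤ eLpNorm f p (μ.restrict A) * μ A ^ (1 - 1 / p.toReal) * ((μ A)⁻¹ * μ A ^ (1 / p.toReal)) :=
          mul_le_mul_left (h1.trans h2) _
      _ = eLpNorm f p (μ.restrict A) *
            (μ A ^ (1 - 1 / p.toReal) * μ A ^ (-1 : ℝ) * μ A ^ (1 / p.toReal)) := by
          rw [ENNReal.rpow_neg_one]; ring
      _ = eLpNorm f p (μ.restrict A) := by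
          rw [← ENNReal.rpow_add _ _ hA0 hAfin, ← ENNReal.rpow_add _ _ hA0 hAfin]
          rw [show 1 - 1/p.toReal + -1 + 1/p.toReal = (0:ℝ) by ring, ENNReal.rpow_zero, mul_one]
  · have h0 : ∫ x in A, f x ∂μ = 0 := integral_undef hint
    simp [h0]

lemma P_contraction {Ω : Type*} [MeasurableSpace Ω] (μ : Measure Ω) {p : ℝ≥0∞} (hp : 1 ≤ p)
    {n : ℕ} {E : Fin n → Set Ω} (hE : ∀ i, MeasurableSet (E i))
    (hd : Pairwise (Function.onFun Disjoint E)) (hpos : ∀ i, μ (E i) ≠ 0)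
    (hfin : ∀ i, μ (E i) ≠ ∞) (f : Ω → ℝ) :
    eLpNorm (fun ω => ∑ i, (E i).indicator
      (fun _ => (∫ x in E i, f x ∂μ) / (μ (E i)).toReal) ω) p μ ≤ eLpNorm f p μ := by
  set a : Fin n → ℝ := fun i => (∫ x in E i, f x ∂μ) / (μ (E i)).toReal with ha
  have key : ∀ i, (‖a i‖₊ : ℝ≥0∞) * μ (E i) ^ (1 / p.toReal) ≤ eLpNorm f p (μ.restrict (E i)) :=
    fun i => atom_bound μ hp (hpos i) (hfin i) f
  have hres : ∀ i, eLpNorm f p (μ.restrict (E i)) ≤ eLpNorm f p μ :=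
    fun i => eLpNorm_mono_measure f Measure.restrict_le_self
  by_cases hptop : p = ∞
  · subst hptop
    rw [eLpNorm_exponent_top, eLpNorm_exponent_top]
    refine essSup_le_of_ae_le _ (Filter.Eventually.of_forall fun ω => ?_)
    show (‖∑ i, (E i).indicator (fun _ => a i) ω‖₊ : ℝ≥0∞) ≤ eLpNormEssSup f μ
    by_cases hω : ∃ i, ω ∈ E i
    · obtain ⟨i, hi⟩ := hω
      rw [sum_ind_eq hd a hi]
      have h := (key i).trans (hres i)
      simpa [eLpNorm_exponent_top] using h
    · push_neg at hω
      rw [sum_ind_zero a hω]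
      simp
  · have hp0 : p ≠ 0 := by intro h; rw [h] at hp; exact absurd hp (by simp)
    have hpR : 0 < p.toReal := ENNReal.toReal_pos hp0 hptop
    rw [eLpNorm_eq_lintegral_rpow_enorm_toReal hp0 hptop, eLpNorm_eq_lintegral_rpow_enorm_toReal hp0 hptop]
    refine ENNReal.rpow_le_rpow ?_ (by positivity)
    have hpt : ∀ ω, (‖∑ i, (E i).indicator (fun _ => a i) ω‖₊ : ℝ≥0∞) ^ p.toReal
        = ∑ i, (E i).indicator (fun _ => (‖a i‖₊ : ℝ≥0∞) ^ p.toReal) ω := by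
      intro ω
      by_cases hω : ∃ i, ω ∈ E i
      · obtain ⟨i, hi⟩ := hω
        rw [sum_ind_eq hd a hi, sum_ind_eq hd (fun i => (‖a i‖₊ : ℝ≥0∞) ^ p.toReal) hi]
      · push_neg at hω
        rw [sum_ind_zero a hω, sum_ind_zero _ hω]
        simp [ENNReal.zero_rpow_of_pos hpR]
    calc ∫⁻ ω, (‖∑ i, (E i).indicator (fun _ => a i) ω‖₊ : ℝ≥0∞) ^ p.toReal ∂μ
        = ∫⁻ ω, ∑ i, (E i).indicator (fun _ => (‖a i‖₊ : ℝ≥0∞) ^ p.toReal) ω ∂μ := by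
          simp_rw [hpt]
      _ = ∑ i, ((‖a i‖₊ : ℝ≥0∞) ^ p.toReal) * μ (E i) := by
          rw [lintegral_finset_sum _ (fun i _ => (measurable_const.indicator (hE i)))]
          congr 1; funext i
          rw [lintegral_indicator (hE i), setLIntegral_const]
      _ ≤ ∑ i, ∫⁻ ω in E i, (‖f ω‖₊ : ℝ≥0∞) ^ p.toReal ∂μ := by
          refine Finset.sum_le_sum fun i _ => ?_
          have h1 := ENNReal.rpow_le_rpow (key i) hpR.le
          rw [ENNReal.mul_rpow_of_nonneg _ _ hpR.le, ← ENNReal.rpow_mul,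
            one_div_mul_cancel hpR.ne', ENNReal.rpow_one] at h1
          rwa [eLpNorm_eq_lintegral_rpow_enorm_toReal hp0 hptop, ← ENNReal.rpow_mul,
            one_div_mul_cancel hpR.ne', ENNReal.rpow_one] at h1
      _ = ∫⁻ ω in ⋃ i, E i, (‖f ω‖₊ : ℝ≥0∞) ^ p.toReal ∂μ := by
          rw [lintegral_iUnion hE hd, tsum_fintype]
      _ ≤ ∫⁻ ω, (‖f ω‖₊ : ℝ≥0∞) ^ p.toReal ∂μ := setLIntegral_le_lintegral _ _

lemma exists_finite_range_approx {Ω : Type*} [MeasurableSpace Ω] (μ : Measure Ω)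
    {p : ℝ≥0∞} {g : Ω → ℝ} (hg : MemLp g p μ) {δ : ℝ≥0∞} (hδ : δ ≠ 0) :
    ∃ s : Ω → ℝ, Measurable s ∧ (Set.range s).Finite ∧ eLpNorm (g - s) p μ < δ := by
  by_cases hptop : p = ∞
  · subst hptop
    obtain ⟨r, hr0, hrδ⟩ : ∃ r : ℝ, 0 < r ∧ ENNReal.ofReal r < δ := by
      rcases eq_or_ne δ ∞ with h | h
      · exact ⟨1, one_pos, h ▸ ENNReal.ofReal_lt_top⟩
      · have htR : 0 < δ.toReal := ENNReal.toReal_pos hδ h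
        refine ⟨δ.toReal / 2, by positivity, ?_⟩
        rw [ENNReal.ofReal_lt_iff_lt_toReal (by positivity) h]
        linarith
    set f' := hg.1.mk g with hf'
    have hf'm : Measurable f' := hg.1.measurable_mk
    have hae : g =ᵐ[μ] f' := hg.1.ae_eq_mk
    have hmem' : MemLp f' ∞ μ := hg.ae_eq hae
    have h1 : eLpNormEssSup f' μ < ∞ := by
      have := hmem'.2; rwa [eLpNorm_exponent_top] at this
    set R := (eLpNormEssSup f' μ).toReal with hR
    have hR0 : 0 ≤ R := ENNReal.toReal_nonneg
    have hRae : ∀ᵐ x ∂μ, ‖f' x‖ ≤ R := by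
      filter_upwards [ae_le_eLpNormEssSup (f := f') (μ := μ)] with x hx
      have : ((‖f' x‖₊ : ℝ≥0∞)).toReal ≤ R := ENNReal.toReal_mono h1.ne hx
      simpa using this
    set c : Ω → ℝ := fun x => max (-R) (min R (f' x)) with hc
    set s : Ω → ℝ := fun x => r * (⌊c x / r⌋ : ℝ) with hs
    have hcm : Measurable c := measurable_const.max (measurable_const.min hf'm)
    refine ⟨s, ?_, ?_, ?_⟩
    · exact (measurable_from_top.comp (Int.measurable_floor.comp (hcm.div_const r))).const_mul r
    · refine ((Set.finite_Icc ⌊-R/r⌋ ⌊R/r⌋).image (fun z : ℤ => r * (z:ℝ))).subset ?_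
      rintro _ ⟨x, rfl⟩
      refine ⟨⌊c x / r⌋, ?_, rfl⟩
      have hcub : c x ≤ R := max_le (by linarith) (min_le_left _ _)
      have hclb : -R ≤ c x := le_max_left _ _
      constructor
      · exact Int.floor_le_floor (by gcongr)
      · exact Int.floor_le_floor (by gcongr)
    · have hb : ∀ᵐ x ∂μ, ‖(g - s) x‖ ≤ r := by
        filter_upwards [hRae, hae] with x hx hgx
        have hcx : c x = f' x := by
          rw [hc]; dsimp only
          rw [min_eq_right (abs_le.1 (by simpa using hx)).2,
            max_eq_right (abs_le.1 (by simpa using hx)).1]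
        have h2 : r * (⌊c x / r⌋ : ℝ) ≤ c x := by
          have := Int.floor_le (c x / r)
          calc r * (⌊c x / r⌋ : ℝ) ≤ r * (c x / r) := by gcongr
          _ = c x := by field_simp
        have h3 : c x < r * (⌊c x / r⌋ : ℝ) + r := by
          have := Int.lt_floor_add_one (c x / r)
          have h4 : c x / r < (⌊c x / r⌋ : ℝ) + 1 := this
          calc c x = r * (c x / r) := by field_simp
          _ < r * ((⌊c x / r⌋ : ℝ) + 1) := by gcongr
          _ = r * (⌊c x / r⌋ : ℝ) + r := by ring
        have : ‖(g - s) x‖ = |c x - r * (⌊c x / r⌋ : ℝ)| := by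
          simp only [Pi.sub_apply, hgx, hcx, hs, Real.norm_eq_abs]
        rw [this, abs_le]
        constructor <;> linarith
      calc eLpNorm (g - s) ∞ μ ≤ μ Set.univ ^ (∞ : ℝ≥0∞).toReal⁻¹ * ENNReal.ofReal r :=
            eLpNorm_le_of_ae_bound hb
        _ = ENNReal.ofReal r := by simp
        _ < δ := hrδ
  · obtain ⟨s, hs, hmem⟩ := hg.exists_simpleFunc_eLpNorm_sub_lt hptop hδ
    exact ⟨s, s.measurable, s.finite_range, hs⟩

lemma exists_net {Ω : Type*} [MeasurableSpace Ω] (μ : Measure Ω) {p : ℝ≥0∞} (hp : 1 ≤ p)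
    {K : Set (Ω → ℝ)} (hKmem : ∀ f ∈ K, MemLp f p μ)
    (hKcpt : ∀ u : ℕ → (Ω → ℝ), (∀ n, u n ∈ K) →
      ∃ f ∈ K, ∃ σ : ℕ → ℕ, StrictMono σ ∧
        Tendsto (fun n => eLpNorm (u (σ n) - f) p μ) atTop (𝓝 0))
    {δ : ℝ≥0∞} (hδ : 0 < δ) :
    ∃ (m : ℕ) (g : Fin m → Ω → ℝ), (∀ j, g j ∈ K) ∧
      ∀ f ∈ K, ∃ j, eLpNorm (f - g j) p μ < δ := by
  by_contra hcon
  push_neg at hcon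
  have hlist : ∀ l : List (Ω → ℝ), (∀ g ∈ l, g ∈ K) →
      ∃ f, f ∈ K ∧ ∀ g ∈ l, δ ≤ eLpNorm (f - g) p μ := by
    intro l hl
    obtain ⟨f, hfK, hf⟩ := hcon l.length (fun j => l.get j) (fun j => hl _ (l.get_mem _))
    refine ⟨f, hfK, fun g hg => ?_⟩
    obtain ⟨j, hj⟩ := List.mem_iff_get.1 hg
    exact hj ▸ hf j
  classical
  let next : {l : List (Ω → ℝ) // ∀ g ∈ l, g ∈ K} → {l : List (Ω → ℝ) // ∀ g ∈ l, g ∈ K} :=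
    fun l => ⟨(hlist l.1 l.2).choose :: l.1, by
      intro g hg
      rcases List.mem_cons.1 hg with h | h
      · exact h ▸ (hlist l.1 l.2).choose_spec.1
      · exact l.2 g h⟩
  let L : ℕ → {l : List (Ω → ℝ) // ∀ g ∈ l, g ∈ K} := fun n => next^[n] ⟨[], by simp⟩
  let u : ℕ → Ω → ℝ := fun n => (hlist (L n).1 (L n).2).choose
  have hLsucc : ∀ n, (L (n+1)).1 = u n :: (L n).1 := by
    intro n
    show (next^[n+1] _).1 = _
    rw [Function.iterate_succ_apply']
  have huK : ∀ n, u n ∈ K := fun n => (hlist (L n).1 (L n).2).choose_spec.1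
  have humem : ∀ m n, m < n → u m ∈ (L n).1 := by
    intro m n h
    induction n with
    | zero => omega
    | succ k ih =>
      rw [hLsucc k]
      rcases Nat.lt_succ_iff_lt_or_eq.1 h with h' | h'
      · exact List.mem_cons_of_mem _ (ih h')
      · exact h' ▸ List.mem_cons_self
  have hsep : ∀ m n, m < n → δ ≤ eLpNorm (u n - u m) p μ :=
    fun m n h => (hlist (L n).1 (L n).2).choose_spec.2 _ (humem m n h)
  obtain ⟨f, hfK, σ, hσ, hconv⟩ := hKcpt u huK
  have hhalf : (0:ℝ≥0∞) < δ / 2 := ENNReal.half_pos hδ.ne'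
  have hev : ∀ᶠ n in atTop, eLpNorm (u (σ n) - f) p μ < δ / 2 :=
    hconv.eventually_lt_const hhalf
  obtain ⟨N, hN⟩ := eventually_atTop.1 hev
  have h1 : eLpNorm (u (σ (N+1)) - f) p μ < δ / 2 := hN _ (by omega)
  have h2 : eLpNorm (u (σ N) - f) p μ < δ / 2 := hN _ le_rfl
  rw [eLpNorm_sub_comm] at h2
  have hlt : σ N < σ (N+1) := hσ (by omega)
  have htri : eLpNorm (u (σ (N+1)) - u (σ N)) p μ ≤
      eLpNorm (u (σ (N+1)) - f) p μ + eLpNorm (f - u (σ N)) p μ := by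
    have hdecomp : u (σ (N+1)) - u (σ N) = (u (σ (N+1)) - f) + (f - u (σ N)) :=
      (sub_add_sub_cancel _ _ _).symm
    rw [hdecomp]
    exact eLpNorm_add_le (((hKmem _ (huK _)).1).sub (hKmem f hfK).1)
      ((hKmem f hfK).1.sub ((hKmem _ (huK _)).1)) hp
  have hfinal := (hsep (σ N) (σ (N+1)) hlt).trans htri
  have hcontr : δ < δ :=
    lt_of_le_of_lt hfinal (by
      calc eLpNorm (u (σ (N+1)) - f) p μ + eLpNorm (f - u (σ N)) p μ
          < δ/2 + δ/2 := ENNReal.add_lt_add h1 h2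
        _ = δ := ENNReal.add_halves δ)
  exact absurd hcontr (lt_irrefl δ)

lemma exists_partition {Ω : Type*} [MeasurableSpace Ω] (μ : Measure Ω)
    {m : ℕ} (s : Fin m → Ω → ℝ) (hmeas : ∀ j, Measurable (s j))
    (hrange : ∀ j, (Set.range (s j)).Finite) :
    ∃ (n : ℕ) (E : Fin n → Set Ω),
      (∀ i, MeasurableSet (E i)) ∧ Pairwise (Function.onFun Disjoint E) ∧
      (∀ i, μ (E i) ≠ 0) ∧ μ (⋃ i, E i)ᶜ = 0 ∧
      (∀ i j, ∀ x ∈ E i, ∀ y ∈ E i, s j x = s j y) := by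
  classical
  set S : Ω → (Fin m → ℝ) := fun ω j => s j ω with hS
  have hSmeas : Measurable S := measurable_pi_lambda _ hmeas
  have hSrange : (Set.range S).Finite := by
    refine (Set.Finite.pi hrange).subset ?_
    rintro _ ⟨ω, rfl⟩ j _
    exact Set.mem_range_self ω
  set V : Finset (Fin m → ℝ) := hSrange.toFinset with hV
  set T : Finset (Fin m → ℝ) := V.filter (fun v => μ (S ⁻¹' {v}) ≠ 0) with hT
  refine ⟨T.card, fun i => S ⁻¹' {(T.equivFin.symm i : Fin m → ℝ)}, ?_, ?_, ?_, ?_, ?_⟩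
  · intro i; exact hSmeas (measurableSet_singleton _)
  · intro i j hij
    refine Disjoint.preimage _ (Set.disjoint_singleton.2 ?_)
    exact fun h => hij (T.equivFin.symm.injective (Subtype.ext h))
  · intro i
    exact (Finset.mem_filter.1 (T.equivFin.symm i).2).2
  · have hUnion : (⋃ i, S ⁻¹' {((T.equivFin.symm i : {x // x ∈ T}) : Fin m → ℝ)}) = S ⁻¹' (↑T) := by
      ext ω
      simp only [Set.mem_iUnion, Set.mem_preimage, Set.mem_singleton_iff, Finset.coe_sort_coe]
      constructor
      · rintro ⟨i, hi⟩
        rw [hi]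
        exact (T.equivFin.symm i).2
      · intro h
        exact ⟨T.equivFin ⟨S ω, h⟩, by simp⟩
    rw [hUnion]
    have hsub : (S ⁻¹' (↑T))ᶜ ⊆ ⋃ v ∈ ((V \ T : Finset _) : Set _), S ⁻¹' {v} := by
      intro ω hω
      have hv : S ω ∈ V := hSrange.mem_toFinset.2 (Set.mem_range_self ω)
      have hnt : S ω ∉ T := fun h => hω h
      exact Set.mem_biUnion (Finset.mem_coe.2 (Finset.mem_sdiff.2 ⟨hv, hnt⟩)) rfl
    refine measure_mono_null hsub ?_
    refine ((measure_biUnion_null_iff (μ := μ) (Finset.countable_toSet _)).2) ?_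
    intro v hv
    obtain ⟨hv1, hv2⟩ := Finset.mem_sdiff.1 (Finset.mem_coe.1 hv)
    by_contra h
    exact hv2 (Finset.mem_filter.2 ⟨hv1, h⟩)
  · intro i j x hx y hy
    rw [Set.mem_preimage, Set.mem_singleton_iff] at hx hy
    have : S x = S y := by rw [hx, hy]
    exact congrFun this j

/-- the couple `(L^{p0}, L^{p1})` over a finite measure space satisfies
Persson's condition (H), via conditional expectation onto a finite measurable
partition: for each `L^{p0}`-compact set `K` (stated sequentially via `eLpNorm`)
and each `ε > 0` there is such a partition whose associated averaging operator `P`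
is an `L^{p_j}`-contraction, maps `L^{p0} + L^{p1}` into `L^{p0} ∩ L^{p1}`, and
approximates the identity on `K` within `ε` in `L^{p0}`. -/
theorem stmt16 {Ω : Type*} [MeasurableSpace Ω] (μ : Measure Ω) [IsFiniteMeasure μ]
    (p0 p1 : ℝ≥0∞) (hp0 : 1 ≤ p0) (hp1 : 1 ≤ p1)
    (K : Set (Ω → ℝ)) (hKmem : ∀ f ∈ K, MemLp f p0 μ)
    (hKcpt : ∀ u : ℕ → (Ω → ℝ), (∀ n, u n ∈ K) →
      ∃ f ∈ K, ∃ σ : ℕ → ℕ, StrictMono σ ∧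
        Tendsto (fun n => eLpNorm (u (σ n) - f) p0 μ) atTop (𝓝 0))
    (ε : ℝ) (hε : 0 < ε) :
    ∃ (n : ℕ) (E : Fin n → Set Ω),
      (∀ i, MeasurableSet (E i)) ∧ Pairwise (Function.onFun Disjoint E) ∧
      (∀ i, 0 < μ (E i)) ∧
      (let P : (Ω → ℝ) → Ω → ℝ := fun f ω =>
        ∑ i, (E i).indicator (fun _ => (∫ x in E i, f x ∂μ) / (μ (E i)).toReal) ω
      (∀ f : Ω → ℝ, eLpNorm (P f) p0 μ ≤ eLpNorm f p0 μ) ∧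
      (∀ f : Ω → ℝ, eLpNorm (P f) p1 μ ≤ eLpNorm f p1 μ) ∧
      (∀ f : Ω → ℝ, (MemLp f p0 μ ∨ MemLp f p1 μ) →
        MemLp (P f) p0 μ ∧ MemLp (P f) p1 μ) ∧
      (∀ f ∈ K, eLpNorm (P f - f) p0 μ < ENNReal.ofReal ε)) := by
  classical
  have hε8 : (0:ℝ) < ε/8 := by linarith
  set δ : ℝ≥0∞ := ENNReal.ofReal (ε/8) with hδdef
  have hδpos : 0 < δ := ENNReal.ofReal_pos.2 hε8
  obtain ⟨m, g, hgK, hnet⟩ := exists_net μ hp0 hKmem hKcpt hδpos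
  have happrox : ∀ j, ∃ s : Ω → ℝ, Measurable s ∧ (Set.range s).Finite ∧
      eLpNorm (g j - s) p0 μ < δ :=
    fun j => exists_finite_range_approx μ (hKmem _ (hgK j)) hδpos.ne'
  choose s hsmeas hsrange hsclose using happrox
  obtain ⟨n, E, hEmeas, hEdisj, hEpos, hEnull, hEconst⟩ := exists_partition μ s hsmeas hsrange
  have hEfin : ∀ i, μ (E i) ≠ ∞ := fun i => measure_ne_top μ _
  set P : (Ω → ℝ) → Ω → ℝ := fun f ω =>
    ∑ i, (E i).indicator (fun _ => (∫ x in E i, f x ∂μ) / (μ (E i)).toReal) ω with hP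
  have hPmeas : ∀ f, Measurable (P f) := fun f =>
    Finset.measurable_sum _ (fun i _ => measurable_const.indicator (hEmeas i))
  have hPcontr : ∀ (p : ℝ≥0∞), 1 ≤ p → ∀ f : Ω → ℝ, eLpNorm (P f) p μ ≤ eLpNorm f p μ :=
    fun p hp f => P_contraction μ hp hEmeas hEdisj hEpos hEfin f
  have hPmem : ∀ (p : ℝ≥0∞) (f : Ω → ℝ), MemLp (P f) p μ :=
    fun p f => memLp_finsetSum _ (fun i _ => (memLp_const _).indicator (hEmeas i))
  refine ⟨n, E, hEmeas, hEdisj, fun i => pos_iff_ne_zero.2 (hEpos i), ?_, ?_, ?_, ?_⟩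
  · exact fun f => hPcontr p0 hp0 f
  · exact fun f => hPcontr p1 hp1 f
  · exact fun f _ => ⟨hPmem p0 f, hPmem p1 f⟩
  · intro f hf
    show eLpNorm (P f - f) p0 μ < ENNReal.ofReal ε
    obtain ⟨j, hj⟩ := hnet f hf
    have hfmem := hKmem f hf
    have hfint : Integrable f μ := hfmem.integrable hp0
    obtain ⟨C, hC⟩ : ∃ C : ℝ, ∀ x, ‖s j x‖ ≤ C := by
      obtain ⟨C, hC⟩ := (((hsrange j).image norm)).bddAbove
      exact ⟨C, fun x => hC (Set.mem_image_of_mem _ (Set.mem_range_self x))⟩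
    have hsjtop : MemLp (s j) ∞ μ :=
      memLp_top_of_bound (hsmeas j).aestronglyMeasurable C (Filter.Eventually.of_forall hC)
    have hsjmem : MemLp (s j) p0 μ := hsjtop.mono_exponent le_top
    have hsjint : Integrable (s j) μ := hsjmem.integrable hp0
    have hpt : ∀ ω ∈ (⋃ i, E i), P (s j) ω = s j ω := by
      intro ω hω
      obtain ⟨i, hi⟩ := Set.mem_iUnion.1 hω
      rw [hP]; dsimp only
      rw [sum_ind_eq hEdisj _ hi]
      have htR : (μ (E i)).toReal ≠ 0 := (ENNReal.toReal_pos (hEpos i) (hEfin i)).ne'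
      rw [setIntegral_congr_fun (hEmeas i) (fun x hx => hEconst i j x hx ω hi), setIntegral_const, measureReal_def,
        smul_eq_mul, mul_comm, mul_div_assoc, div_self htR, mul_one]
    have hPs0 : eLpNorm (P (s j) - s j) p0 μ = 0 := by
      have hnullsub : {ω | ¬ (P (s j) - s j) ω = 0} ⊆ (⋃ i, E i)ᶜ := by
        intro ω hω hmem
        exact hω (by simp [Pi.sub_apply, hpt ω hmem])
      have haeq : (P (s j) - s j) =ᵐ[μ] 0 :=
        (MeasureTheory.ae_iff).2 (measure_mono_null hnullsub hEnull)
      rw [eLpNorm_congr_ae haeq, eLpNorm_zero]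
    have hlin : P f - P (s j) = P (f - s j) := by
      funext ω
      rw [hP]; simp only [Pi.sub_apply]
      rw [← Finset.sum_sub_distrib]
      refine Finset.sum_congr rfl fun i _ => ?_
      by_cases hωi : ω ∈ E i
      · rw [Set.indicator_of_mem hωi, Set.indicator_of_mem hωi, Set.indicator_of_mem hωi]
        rw [integral_sub hfint.integrableOn hsjint.integrableOn, div_sub_div_same]
      · rw [Set.indicator_of_notMem hωi, Set.indicator_of_notMem hωi,
          Set.indicator_of_notMem hωi, sub_zero]
    have hdecomp : P f - f = (P (f - s j)) + ((P (s j) - s j) + (s j - f)) := by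
      rw [← hlin]; abel
    have hf_aesm := hfmem.1
    have hsj_aesm : AEStronglyMeasurable (s j) μ := (hsmeas j).aestronglyMeasurable
    have htri : eLpNorm (P f - f) p0 μ ≤
        eLpNorm (P (f - s j)) p0 μ +
          (eLpNorm (P (s j) - s j) p0 μ + eLpNorm (s j - f) p0 μ) := by
      rw [hdecomp]
      refine (eLpNorm_add_le (hPmeas _).aestronglyMeasurable
        ((((hPmeas _).aestronglyMeasurable).sub hsj_aesm).add (hsj_aesm.sub hf_aesm)) hp0).trans ?_
      exact add_le_add le_rfl (eLpNorm_add_le ((hPmeas _).aestronglyMeasurable.sub hsj_aesm)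
        (hsj_aesm.sub hf_aesm) hp0)
    have hgj_aesm := (hKmem _ (hgK j)).1
    have hfs : eLpNorm (f - s j) p0 μ < δ + δ := by
      have hdec2 : f - s j = (f - g j) + (g j - s j) := (sub_add_sub_cancel _ _ _).symm
      calc eLpNorm (f - s j) p0 μ ≤ eLpNorm (f - g j) p0 μ + eLpNorm (g j - s j) p0 μ := by
            rw [hdec2]; exact eLpNorm_add_le (hf_aesm.sub hgj_aesm) (hgj_aesm.sub hsj_aesm) hp0
        _ < δ + δ := ENNReal.add_lt_add hj (hsclose j)
    calc eLpNorm (P f - f) p0 μ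
        ≤ eLpNorm (P (f - s j)) p0 μ +
            (eLpNorm (P (s j) - s j) p0 μ + eLpNorm (s j - f) p0 μ) := htri
      _ = eLpNorm (P (f - s j)) p0 μ + eLpNorm (f - s j) p0 μ := by
          rw [hPs0, zero_add, eLpNorm_sub_comm]
      _ ≤ eLpNorm (f - s j) p0 μ + eLpNorm (f - s j) p0 μ :=
          add_le_add_left (hPcontr p0 hp0 _) _
      _ < (δ + δ) + (δ + δ) := ENNReal.add_lt_add hfs hfs
      _ ≤ ENNReal.ofReal ε := by
          rw [hδdef, ← ENNReal.ofReal_add (by linarith) (by linarith),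
            ← ENNReal.ofReal_add (by linarith) (by linarith)]
          exact ENNReal.ofReal_le_ofReal (by linarith)
end
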